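/- arXiv:2409.11152 — 5 statements merged into one kernel-verified Lean document; each statement's English description precedes it below -/
import Mathlib

section
/- There exist constants c > 0 and n_0 such that for every n ≥ n_0 and every p with 1 − (1/10)/n ≤ p ≤ 1, if G ~ G(n, p) then the probability that G is even-decomposable is at most e^{-c n}. -/
/-- Number of edges of the induced subgraph of `G` on the vertex set `S`. -/
noncomputable def edgesIn {V : Type*} (G : SimpleGraph V) (S : Set V) : ℕ :=
  {e ∈ G.edgeSet | ∀ v ∈ e, v ∈ S}.ncard

/-- A graph is even-decomposable if there is a sequence `univ = V_0 ⊃ V_1 ⊃ ⋯ ⊃ V_k = ∅`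
such that each induced subgraph `G[V_i]` has an even number of edges and each difference
`V_i \ V_{i+1}` is an independent set. -/
def EvenDecomposable {V : Type*} (G : SimpleGraph V) : Prop :=
  ∃ (k : ℕ) (Vs : ℕ → Set V),
    Vs 0 = Set.univ ∧ Vs k = ∅ ∧
    (∀ i < k, Vs (i + 1) ⊂ Vs i) ∧
    (∀ i < k, Even (edgesIn G (Vs i))) ∧
    (∀ i < k, ∀ u ∈ Vs i \ Vs (i + 1), ∀ v ∈ Vs i \ Vs (i + 1), ¬ G.Adj u v)

open scoped Classical in
/-- The probability that `G(n, p)` (the binomial random graph on vertex set `Fin n` with edge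
probability `p`) satisfies the predicate `P`. -/
noncomputable def prob (n : ℕ) (p : ℝ) (P : SimpleGraph (Fin n) → Prop) : ℝ :=
  ∑ G : SimpleGraph (Fin n),
    if P G then p ^ G.edgeSet.ncard * (1 - p) ^ (n.choose 2 - G.edgeSet.ncard) else 0

section Aux
variable {n : ℕ}

lemma edgesIn_mono (H : SimpleGraph (Fin n)) {S T : Set (Fin n)} (h : S ⊆ T) :
    edgesIn H S ≤ edgesIn H T := by
  refine Set.ncard_le_ncard ?_ (Set.toFinite _)
  rintro e ⟨he, hv⟩
  exact ⟨he, fun v hv' => h (hv v hv')⟩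

lemma edgesIn_empty (H : SimpleGraph (Fin n)) : edgesIn H (∅ : Set (Fin n)) = 0 := by
  unfold edgesIn
  convert Set.ncard_empty (Sym2 (Fin n))
  ext e
  simp only [Set.mem_setOf_eq, Set.mem_empty_iff_false, iff_false, not_and]
  intro he hv
  induction e with
  | _ x y => exact hv x (Sym2.mem_mk_left x y)

lemma edgesIn_top (S : Set (Fin n)) :
    edgesIn (⊤ : SimpleGraph (Fin n)) S = S.ncard.choose 2 := by
  classical
  have himg : {e ∈ (⊤ : SimpleGraph (Fin n)).edgeSet | ∀ v ∈ e, v ∈ S}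
      = Sym2.map (Subtype.val : S → Fin n) '' (⊤ : SimpleGraph S).edgeSet := by
    ext e
    constructor
    · rintro ⟨he, hv⟩
      induction e with
      | _ x y =>
        rw [SimpleGraph.mem_edgeSet, SimpleGraph.top_adj] at he
        refine ⟨s(⟨x, hv x (Sym2.mem_mk_left x y)⟩, ⟨y, hv y (Sym2.mem_mk_right x y)⟩), ?_, rfl⟩
        rw [SimpleGraph.mem_edgeSet, SimpleGraph.top_adj]
        exact fun hxy => he (congrArg Subtype.val hxy)
    · rintro ⟨e', he', rfl⟩
      induction e' with
      | _ x y =>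
        rw [SimpleGraph.mem_edgeSet, SimpleGraph.top_adj] at he'
        constructor
        · rw [Sym2.map_pair_eq, SimpleGraph.mem_edgeSet, SimpleGraph.top_adj]
          exact fun h => he' (Subtype.ext h)
        · intro v hv
          rw [Sym2.map_pair_eq] at hv
          rcases Sym2.mem_iff.1 hv with rfl | rfl
          · exact x.2
          · exact y.2
  rw [edgesIn, himg,
    Set.ncard_image_of_injective _ (Sym2.map.injective Subtype.val_injective)]
  rw [Set.ncard_eq_toFinset_card']
  have : ((⊤ : SimpleGraph S).edgeSet).toFinset = (⊤ : SimpleGraph S).edgeFinset := rfl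
  rw [this, SimpleGraph.card_edgeFinset_top_eq_card_choose_two]
  congr 1
  rw [Set.ncard_eq_toFinset_card', Set.toFinset_card]

lemma edgesIn_add_edgesIn_compl (G : SimpleGraph (Fin n)) (S : Set (Fin n)) :
    edgesIn G S + edgesIn Gᶜ S = S.ncard.choose 2 := by
  rw [← edgesIn_top S]
  unfold edgesIn
  rw [← Set.ncard_union_eq ?_ (Set.toFinite _) (Set.toFinite _)]
  · congr 1
    ext e
    have hsup : G.edgeSet ∪ Gᶜ.edgeSet = (⊤ : SimpleGraph (Fin n)).edgeSet := by
      rw [← SimpleGraph.edgeSet_sup, sup_compl_eq_top]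
    simp only [Set.mem_union, Set.mem_setOf_eq]
    constructor
    · rintro (⟨he, h⟩ | ⟨he, h⟩)
      · exact ⟨hsup ▸ Set.mem_union_left _ he, h⟩
      · exact ⟨hsup ▸ Set.mem_union_right _ he, h⟩
    · rintro ⟨he, h⟩
      rw [← hsup] at he
      rcases he with he | he
      · exact Or.inl ⟨he, h⟩
      · exact Or.inr ⟨he, h⟩
  · have hd : Disjoint G.edgeSet Gᶜ.edgeSet :=
      SimpleGraph.disjoint_edgeSet.2 disjoint_compl_right
    rw [Set.disjoint_left]
    rintro e ⟨he, -⟩ ⟨he', -⟩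
    exact Set.disjoint_left.1 hd he he'

lemma edgesIn_step (H : SimpleGraph (Fin n)) {S T : Set (Fin n)} (hTS : T ⊆ S)
    (hclique : ∀ u ∈ S \ T, ∀ v ∈ S \ T, u ≠ v → H.Adj u v) :
    edgesIn H T + ((S \ T).ncard).choose 2 ≤ edgesIn H S := by
  classical
  set A := S \ T with hA
  have h1 : A.ncard.choose 2 ≤ edgesIn H A := by
    rw [← edgesIn_top A]
    refine Set.ncard_le_ncard ?_ (Set.toFinite _)
    rintro e ⟨he, hv⟩
    refine ⟨?_, hv⟩
    induction e with
    | _ x y =>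
      rw [SimpleGraph.mem_edgeSet, SimpleGraph.top_adj] at he
      rw [SimpleGraph.mem_edgeSet]
      exact hclique x (hv x (Sym2.mem_mk_left x y)) y (hv y (Sym2.mem_mk_right x y)) he
  refine le_trans (Nat.add_le_add_left h1 _) ?_
  unfold edgesIn
  rw [← Set.ncard_union_eq ?_ (Set.toFinite _) (Set.toFinite _)]
  · refine Set.ncard_le_ncard ?_ (Set.toFinite _)
    rintro e (⟨he, hv⟩ | ⟨he, hv⟩)
    · exact ⟨he, fun v hv' => hTS (hv v hv')⟩
    · exact ⟨he, fun v hv' => (hv v hv').1⟩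
  · rw [Set.disjoint_left]
    rintro e ⟨-, hvT⟩ ⟨-, hvA⟩
    induction e with
    | _ x y => exact (hvA x (Sym2.mem_mk_left x y)).2 (hvT x (Sym2.mem_mk_left x y))

lemma choose_two_lb (s : ℕ) : s - 1 ≤ s.choose 2 := by
  match s with
  | 0 => simp
  | m + 1 =>
    rw [Nat.choose_succ_succ, Nat.choose_one_right]
    omega

lemma evenDecomposable_compl_lower (G : SimpleGraph (Fin n))
    (h : EvenDecomposable G) : n / 2 ≤ Gᶜ.edgeSet.ncard := by
  obtain ⟨k, Vs, h0, hk, hss, heven, hind⟩ := h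
  have hevenAll : ∀ i ≤ k, Even (edgesIn G (Vs i)) := by
    intro i hi
    rcases lt_or_eq_of_le hi with hi | rfl
    · exact heven i hi
    · rw [hk, edgesIn_empty]; exact Even.zero
  have key : ∀ j, j ≤ k → (Vs (k - j)).ncard / 2 ≤ edgesIn Gᶜ (Vs (k - j)) := by
    intro j
    induction j with
    | zero =>
      intro _
      simp only [Nat.sub_zero, hk, Set.ncard_empty]
      omega
    | succ j ih =>
      intro hj
      have ihj := ih (by omega)
      set i := k - (j + 1) with hidef
      have hik : i < k := by omega
      have hsucc : i + 1 = k - j := by omega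
      set S := Vs i
      set T := Vs (i + 1) with hT
      have hTS : T ⊂ S := hss i hik
      have hmono : edgesIn Gᶜ T ≤ edgesIn Gᶜ S := edgesIn_mono Gᶜ hTS.subset
      have hablt : T.ncard < S.ncard := Set.ncard_lt_ncard hTS (Set.toFinite _)
      have hdiff : (S \ T).ncard = S.ncard - T.ncard := Set.ncard_diff hTS.subset (Set.toFinite _)
      have eqS := edgesIn_add_edgesIn_compl G S
      have eqT := edgesIn_add_edgesIn_compl G T
      have hES : edgesIn G S % 2 = 0 := Nat.even_iff.1 (hevenAll i (le_of_lt hik))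
      have hET : edgesIn G T % 2 = 0 := Nat.even_iff.1 (hevenAll (i + 1) (by omega))
      have ihT : T.ncard / 2 ≤ edgesIn Gᶜ T := by rw [hT, hsucc]; exact ihj
      by_cases hone : S.ncard = T.ncard + 1
      · have hcs : S.ncard.choose 2 = T.ncard + T.ncard.choose 2 := by
          rw [hone, Nat.choose_succ_succ, Nat.choose_one_right]
        omega
      · have h2 : T.ncard + 2 ≤ S.ncard := by omega
        have hclique : ∀ u ∈ S \ T, ∀ v ∈ S \ T, u ≠ v → Gᶜ.Adj u v := by
          intro u hu v hv huv
          exact (SimpleGraph.compl_adj G u v).2 ⟨huv, hind i hik u hu v hv⟩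
        have hstep := edgesIn_step Gᶜ hTS.subset hclique
        have hcb := choose_two_lb ((S \ T).ncard)
        omega
  have h0' := key k le_rfl
  rw [Nat.sub_self, h0] at h0'
  have huniv : edgesIn Gᶜ (Set.univ : Set (Fin n)) = Gᶜ.edgeSet.ncard := by
    unfold edgesIn
    congr 1
    ext e
    simp
  rw [Set.ncard_univ, Nat.card_eq_fintype_card, Fintype.card_fin, huniv] at h0'
  exact h0'

lemma edge_count_split (G : SimpleGraph (Fin n)) :
    G.edgeSet.ncard + Gᶜ.edgeSet.ncard = n.choose 2 := by
  have h := edgesIn_add_edgesIn_compl G Set.univ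
  have e1 : edgesIn G Set.univ = G.edgeSet.ncard := by
    unfold edgesIn; congr 1; ext e; simp
  have e2 : edgesIn Gᶜ Set.univ = Gᶜ.edgeSet.ncard := by
    unfold edgesIn; congr 1; ext e; simp
  rwa [e1, e2, Set.ncard_univ, Nat.card_eq_fintype_card, Fintype.card_fin] at h

end Aux

open scoped Classical in
lemma sum_over_graphs (n : ℕ) (x y : ℝ) :
    ∑ G : SimpleGraph (Fin n), x ^ G.edgeSet.ncard * y ^ (n.choose 2 - G.edgeSet.ncard)
      = (x + y) ^ n.choose 2 := by
  set E := (⊤ : SimpleGraph (Fin n)).edgeFinset with hEdef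
  have hE : E.card = n.choose 2 := by
    rw [hEdef, SimpleGraph.card_edgeFinset_top_eq_card_choose_two, Fintype.card_fin]
  have hcard : ∀ G : SimpleGraph (Fin n), G.edgeSet.ncard = G.edgeFinset.card := by
    intro G
    rw [← SimpleGraph.coe_edgeFinset, Set.ncard_coe_finset]
  have h1 : ∑ G : SimpleGraph (Fin n), x ^ G.edgeSet.ncard * y ^ (n.choose 2 - G.edgeSet.ncard)
      = ∑ s ∈ E.powerset, x ^ s.card * y ^ (n.choose 2 - s.card) := by
    refine Finset.sum_nbij' (fun G => G.edgeFinset)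
      (fun s => SimpleGraph.fromEdgeSet ↑s) ?_ ?_ ?_ ?_ ?_
    · intro G _
      exact Finset.mem_powerset.2 (SimpleGraph.edgeFinset_mono le_top)
    · intro s _
      exact Finset.mem_univ _
    · intro G _
      show SimpleGraph.fromEdgeSet ↑G.edgeFinset = G
      rw [SimpleGraph.coe_edgeFinset, SimpleGraph.fromEdgeSet_edgeSet]
    · intro s hs
      have hnd : ∀ e ∈ (s : Set (Sym2 (Fin n))), ¬ e.IsDiag := by
        intro e he
        have : e ∈ (⊤ : SimpleGraph (Fin n)).edgeSet := by
          rw [← SimpleGraph.coe_edgeFinset]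
          exact_mod_cast (Finset.mem_powerset.1 hs) he
        exact SimpleGraph.not_isDiag_of_mem_edgeSet _ this
      beta_reduce
      apply Finset.coe_injective
      rw [SimpleGraph.coe_edgeFinset, SimpleGraph.edgeSet_fromEdgeSet]
      ext e
      simp only [Set.mem_diff, Set.mem_setOf_eq, and_iff_left_iff_imp]
      exact fun he => hnd e he
    · intro G _
      rw [hcard]
  rw [h1, Finset.sum_powerset, ← hE]
  have h2 : ∀ j ∈ Finset.range (E.card + 1),
      ∑ s ∈ Finset.powersetCard j E, x ^ s.card * y ^ (E.card - s.card)
        = E.card.choose j * (x ^ j * y ^ (E.card - j)) := by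
    intro j hj
    rw [Finset.sum_congr rfl (fun s hs => ?_), Finset.sum_const,
      Finset.card_powersetCard, nsmul_eq_mul]
    rw [(Finset.mem_powersetCard.1 hs).2]
  rw [Finset.sum_congr rfl h2, add_pow]
  refine Finset.sum_congr rfl fun j hj => by ring

/-- For `1 - (1/10)/n ≤ p ≤ 1` and `G ~ G(n, p)`, the probability that `G` is
even-decomposable is at most `e^{-c n}`. -/
theorem even_decomposable_prob_very_dense :
    ∃ c : ℝ, 0 < c ∧ ∃ n₀ : ℕ, ∀ n : ℕ, n₀ ≤ n → ∀ p : ℝ,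
      1 - (1 / 10) / (n : ℝ) ≤ p → p ≤ 1 →
      prob n p (fun G => EvenDecomposable G) ≤ Real.exp (-(c * (n : ℝ))) := by
  classical
  refine ⟨1/2, by norm_num, 20, ?_⟩
  intro n hn p hp1 hp2
  have hn20 : (20:ℝ) ≤ (n:ℝ) := by exact_mod_cast hn
  have hnpos : (0:ℝ) < (n:ℝ) := by linarith
  have hn0 : (n:ℝ) ≠ 0 := ne_of_gt hnpos
  have hqle : 1 - p ≤ 1 / (10 * (n:ℝ)) := by
    have : (1/10) / (n:ℝ) = 1 / (10 * (n:ℝ)) := by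
      field_simp
    linarith
  have hq0 : 0 ≤ 1 - p := by linarith
  have hp0 : 0 ≤ p := by
    have h1 : 1 / (10 * (n:ℝ)) ≤ 1 := by
      rw [div_le_one (by linarith)]
      linarith
    linarith
  set N := n.choose 2 with hN
  set t := n / 2 with ht
  -- Step 1: pointwise bound on summands
  have step1 : prob n p (fun G => EvenDecomposable G) ≤
      (1/10)^t * ∑ G : SimpleGraph (Fin n),
        p ^ G.edgeSet.ncard * (10*(1-p)) ^ (N - G.edgeSet.ncard) := by
    unfold prob
    rw [Finset.mul_sum]
    refine Finset.sum_le_sum fun G _ => ?_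
    by_cases hG : EvenDecomposable G
    · rw [if_pos hG]
      have hsplit := edge_count_split G
      have hlow := evenDecomposable_compl_lower G hG
      set e := G.edgeSet.ncard with he
      set m := N - e with hm
      have htm : t ≤ m := by omega
      have key : (1:ℝ) ≤ (1/10)^t * 10^m := by
        have h1 : (10:ℝ)^m = 10^t * 10^(m - t) := by
          rw [← pow_add]
          congr 1
          omega
        have h2 : (1/10:ℝ)^t * 10^t = 1 := by
          rw [← mul_pow]
          norm_num
        calc (1:ℝ) ≤ 10^(m-t) := one_le_pow₀ (by norm_num)
          _ = ((1/10)^t * 10^t) * 10^(m-t) := by rw [h2, one_mul]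
          _ = (1/10)^t * 10^m := by rw [h1]; ring
      calc p^e * (1-p)^m = 1 * (p^e * (1-p)^m) := (one_mul _).symm
        _ ≤ ((1/10)^t * 10^m) * (p^e * (1-p)^m) := by
            apply mul_le_mul_of_nonneg_right key (by positivity)
        _ = (1/10)^t * (p^e * (10*(1-p))^m) := by rw [mul_pow]; ring
    · rw [if_neg hG]
      positivity
  rw [sum_over_graphs] at step1
  -- Step 2: numeric bounds
  have h2N : 2 * N ≤ n * n := by
    have h1 : N = n * (n-1) / 2 := Nat.choose_two_right n
    have h2 : n * (n-1) / 2 * 2 ≤ n * (n-1) := Nat.div_mul_le_self _ _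
    have h3 : n * (n - 1) ≤ n * n := Nat.mul_le_mul_left n (by omega)
    omega
  have hNr : (N:ℝ) ≤ (n:ℝ) * n / 2 := by
    have : ((2*N : ℕ):ℝ) ≤ ((n*n : ℕ):ℝ) := by exact_mod_cast h2N
    push_cast at this
    linarith
  have hb1 : (p + 10*(1-p))^N ≤ Real.exp (9*(n:ℝ)/20) := by
    have hadd : p + 10*(1-p) ≤ Real.exp (9*(1-p)) := by
      have h := Real.add_one_le_exp (9*(1-p))
      linarith
    have hnonneg : 0 ≤ p + 10*(1-p) := by linarith
    calc (p + 10*(1-p))^N ≤ (Real.exp (9*(1-p)))^N := by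
          exact pow_le_pow_left₀ hnonneg hadd N
      _ = Real.exp ((N:ℝ) * (9*(1-p))) := by rw [Real.exp_nat_mul]
      _ ≤ Real.exp (9*(n:ℝ)/20) := by
          rw [Real.exp_le_exp]
          have e1 : (N:ℝ) * (9*(1-p)) ≤ (N:ℝ) * (9 * (1/(10*(n:ℝ)))) := by
            apply mul_le_mul_of_nonneg_left _ (Nat.cast_nonneg N)
            linarith
          have e2 : (N:ℝ) * (9 * (1/(10*(n:ℝ)))) ≤ ((n:ℝ)*n/2) * (9 * (1/(10*(n:ℝ)))) := by
            apply mul_le_mul_of_nonneg_right hNr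
            positivity
          have e3 : ((n:ℝ)*n/2) * (9 * (1/(10*(n:ℝ)))) = 9*(n:ℝ)/20 := by
            field_simp
            ring
          linarith
  have h110 : (1/10:ℝ) ≤ Real.exp (-2) := by
    have hexp2 : Real.exp 2 ≤ 10 := by
      have h := Real.exp_one_lt_d9
      have h2 : Real.exp 2 = Real.exp 1 * Real.exp 1 := by
        rw [← Real.exp_add]; norm_num
      nlinarith [Real.exp_pos 1]
    rw [Real.exp_neg, ← one_div]
    exact one_div_le_one_div_of_le (Real.exp_pos 2) hexp2
  have hb2 : ((1:ℝ)/10)^t ≤ Real.exp ((t:ℝ) * (-2)) := by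
    calc ((1:ℝ)/10)^t ≤ (Real.exp (-2))^t := pow_le_pow_left₀ (by norm_num) h110 t
      _ = Real.exp ((t:ℝ) * (-2)) := by rw [Real.exp_nat_mul]
  have hfinal : Real.exp ((t:ℝ) * (-2)) * Real.exp (9*(n:ℝ)/20) ≤ Real.exp (-(1/2 * (n:ℝ))) := by
    rw [← Real.exp_add, Real.exp_le_exp]
    have h2t : (n:ℝ) - 1 ≤ 2 * (t:ℝ) := by
      have : n ≤ 2 * t + 1 := by omega
      have := (Nat.cast_le (α := ℝ)).2 this
      push_cast at this
      linarith
    linarith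
  calc prob n p (fun G => EvenDecomposable G)
      ≤ (1/10)^t * (p + 10*(1-p))^N := step1
    _ ≤ Real.exp ((t:ℝ) * (-2)) * Real.exp (9*(n:ℝ)/20) := by
        apply mul_le_mul hb2 hb1 (by positivity) (le_of_lt (Real.exp_pos _))
    _ ≤ Real.exp (-(1/2 * (n:ℝ))) := hfinal
end

section
/- For every n ≥ 4, if G ~ G(n, 1/2) then the probability that G is not even-degenerate is at least (1/2)^{2n−3}. Equivalently, for n ≥ 4 the number of graphs on vertex set {1,…,n} that are not even-degenerate is at least 2^{n(n-1)/2 − (2n−3)}. -/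
/-- A graph on `Fin n` is even-degenerate if there is an ordering `v_1, …, v_n` of its vertices
(given by a permutation) such that for each `1 ≤ i ≤ n - 2`, the vertex `v_i` has an even number
of neighbours among `{v_{i+1}, …, v_n}`. (Indices below are 0-based.) -/
def EvenDegenerate {n : ℕ} (G : SimpleGraph (Fin n)) : Prop :=
  ∃ e : Equiv.Perm (Fin n), ∀ i : Fin n, (i : ℕ) + 3 ≤ n →
    Even ({j : Fin n | i < j ∧ G.Adj (e i) (e j)}.ncard)

set_option linter.unnecessarySeqFocus false
set_option linter.unreachableTactic false
set_option linter.unusedTactic false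
set_option linter.deprecated false

open scoped Classical


lemma ncard_forward {n : ℕ} (G : SimpleGraph (Fin n)) (e : Equiv.Perm (Fin n)) (i : Fin n)
    (h : ∀ j, G.Adj (e i) (e j) → i < j) :
    ({j : Fin n | i < j ∧ G.Adj (e i) (e j)}).ncard = G.degree (e i) := by
  have hset : {j : Fin n | i < j ∧ G.Adj (e i) (e j)} = ⇑e ⁻¹' (G.neighborSet (e i)) := by
    ext j
    simp only [Set.mem_setOf_eq, Set.mem_preimage, SimpleGraph.mem_neighborSet]
    exact ⟨fun ⟨_, h2⟩ => h2, fun h2 => ⟨h j h2, h2⟩⟩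
  rw [hset]
  have : ⇑e ⁻¹' (G.neighborSet (e i)) = ⇑e.symm '' (G.neighborSet (e i)) := by
    rw [Equiv.image_eq_preimage_symm]; simp
  rw [this, Set.ncard_image_of_injective _ e.symm.injective,
    Set.ncard_eq_toFinset_card', Set.toFinset_card]
  exact G.card_neighborSet_eq_degree (e i)

lemma bad_aux {n : ℕ} (hn : 4 ≤ n) (G : SimpleGraph (Fin n)) (b : Fin n)
    (h1 : ∀ v, v ≠ b → Odd (G.degree v))
    (h2 : Odd (G.degree b) ∨ ∀ x, ¬ G.Adj b x) : ¬ EvenDegenerate G := by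
  rintro ⟨e, he⟩
  set i0 : Fin n := ⟨0, by omega⟩ with hi0
  by_cases hodd : Odd (G.degree (e i0))
  · have h0 := he i0 (by simp [hi0]; omega)
    rw [ncard_forward G e i0 ?_] at h0
    · exact (Nat.not_even_iff_odd.mpr hodd) h0
    · intro j hj
      have : j ≠ i0 := fun hji => by
        rw [hji] at hj; exact G.loopless.irrefl _ hj
      rw [Fin.lt_def]
      have := Fin.val_ne_iff.mpr this
      simp only [hi0] at this ⊢
      omega
  · -- e i0 = b, b isolated
    have heb : e i0 = b := by
      by_contra hne
      exact hodd (h1 _ hne)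
    have hiso : ∀ x, ¬ G.Adj b x := by
      rcases h2 with h2 | h2
      · exact absurd (heb ▸ h2) hodd
      · exact h2
    set i1 : Fin n := ⟨1, by omega⟩ with hi1
    have h0 := he i1 (by simp [hi1]; omega)
    rw [ncard_forward G e i1 ?_] at h0
    · have : e i1 ≠ b := by
        rw [← heb]
        simp [i1, i0, Fin.ext_iff]
      exact (Nat.not_even_iff_odd.mpr (h1 _ this)) h0
    · intro j hj
      have hj1 : j ≠ i1 := fun hji => by
        rw [hji] at hj; exact G.loopless.irrefl _ hj
      have hj0 : j ≠ i0 := by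
        intro hji
        rw [hji, heb] at hj
        exact hiso _ hj.symm
      rw [Fin.lt_def]
      rw [Fin.ne_iff_vne] at hj1 hj0
      simp only [hi0, hi1] at hj1 hj0 ⊢
      omega

variable {k : ℕ}

noncomputable def Hg (f : {e : Sym2 (Fin (k+2)) // ¬ e.IsDiag} → Bool) :
    SimpleGraph (Fin (k+2)) :=
  SimpleGraph.fromRel (fun x y =>
    (if h : (s(x,y) : Sym2 (Fin (k+2))).IsDiag then false else f ⟨s(x,y), h⟩) = true)

lemma Hg_adj (f : {e : Sym2 (Fin (k+2)) // ¬ e.IsDiag} → Bool) (x y : Fin (k+2)) :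
    (Hg f).Adj x y ↔ ∃ h : ¬ (s(x,y) : Sym2 (Fin (k+2))).IsDiag, f ⟨s(x,y), h⟩ = true := by
  rw [Hg, SimpleGraph.fromRel_adj]
  rw [show (s(y,x) : Sym2 (Fin (k+2))) = s(x,y) from Sym2.eq_swap]
  rw [or_self]
  constructor
  · rintro ⟨hne, h⟩
    have hd : ¬ (s(x,y) : Sym2 (Fin (k+2))).IsDiag := by simp [Sym2.mk_isDiag_iff, hne]
    rw [dif_neg hd] at h
    exact ⟨hd, h⟩
  · rintro ⟨hd, h⟩
    have hne : x ≠ y := by simpa [Sym2.mk_isDiag_iff] using hd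
    exact ⟨hne, by rw [dif_neg hd]; exact h⟩

lemma Hg_inj : Function.Injective (Hg (k := k)) := by
  intro f g h
  funext e
  obtain ⟨e, he⟩ := e
  induction e with
  | _ x y =>
    have h2 : (Hg f).Adj x y ↔ (Hg g).Adj x y := by rw [h]
    rw [Hg_adj, Hg_adj] at h2
    have h3 : f ⟨s(x,y), he⟩ = true ↔ g ⟨s(x,y), he⟩ = true := by
      constructor
      · intro hv; obtain ⟨_, hv'⟩ := h2.mp ⟨he, hv⟩; exact hv'
      · intro hv; obtain ⟨_, hv'⟩ := h2.mpr ⟨he, hv⟩; exact hv'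
    rcases Bool.eq_false_or_eq_true (f ⟨s(x,y), he⟩) with hfv | hfv <;>
      rcases Bool.eq_false_or_eq_true (g ⟨s(x,y), he⟩) with hgv | hgv <;>
      simp_all

def avtx (k : ℕ) : Fin (k+4) := ⟨k+3, by omega⟩
def bvtx (k : ℕ) : Fin (k+4) := ⟨k+2, by omega⟩
def liftV (v : Fin (k+2)) : Fin (k+4) := ⟨v.val, by omega⟩

noncomputable def Psi (f : {e : Sym2 (Fin (k+2)) // ¬ e.IsDiag} → Bool) :
    SimpleGraph (Fin (k+4)) :=
  SimpleGraph.fromRel (fun u v =>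
    (∃ hu : u.val < k+2, ∃ hv : v.val < k+2, (Hg f).Adj ⟨u.val, hu⟩ ⟨v.val, hv⟩)
    ∨ (u.val = k+3 ∧ ∃ hv : v.val < k+2, Even ((Hg f).degree ⟨v.val, hv⟩))
    ∨ (u.val = k+3 ∧ v.val = k+2 ∧ Even k))

variable (f : {e : Sym2 (Fin (k+2)) // ¬ e.IsDiag} → Bool)

lemma psi_adj_lift (x y : Fin (k+2)) :
    (Psi f).Adj (liftV x) (liftV y) ↔ (Hg f).Adj x y := by
  rw [Psi, SimpleGraph.fromRel_adj]
  constructor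
  · rintro ⟨hne, (⟨hu, hv, h⟩ | ⟨h, _⟩ | ⟨h, _⟩) | (⟨hu, hv, h⟩ | ⟨h, _⟩ | ⟨h, _⟩)⟩
    · simpa [liftV] using h
    · exact absurd h (by simp [liftV] <;> omega)
    · exact absurd h (by simp [liftV] <;> omega)
    · exact (by simpa [liftV] using h : (Hg f).Adj y x).symm
    · exact absurd h (by simp [liftV] <;> omega)
    · exact absurd h (by simp [liftV] <;> omega)
  · intro h
    refine ⟨?_, Or.inl (Or.inl ⟨x.isLt, y.isLt, by simpa [liftV] using h⟩)⟩
    simp only [liftV, Fin.ne_iff_vne]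
    exact Fin.val_ne_iff.mpr h.ne

lemma psi_adj_lift_a (v : Fin (k+2)) :
    (Psi f).Adj (liftV v) (avtx k) ↔ Even ((Hg f).degree v) := by
  rw [Psi, SimpleGraph.fromRel_adj]
  constructor
  · rintro ⟨hne, (⟨hu, hv, h⟩ | ⟨h, _⟩ | ⟨h, _⟩) | (⟨hu, hv, h⟩ | ⟨h, hv, hev⟩ | ⟨h, h2, _⟩)⟩
    · exact absurd hv (by simp [avtx] <;> omega)
    · exact absurd h (by simp [liftV] <;> omega)
    · exact absurd h (by simp [liftV] <;> omega)
    · exact absurd hu (by simp [avtx] <;> omega)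
    · convert hev using 2; simp [liftV]
    · exact absurd h2 (by simp [liftV] <;> omega)
  · intro h
    refine ⟨by simp [liftV, avtx, Fin.ne_iff_vne]; omega,
      Or.inr (Or.inr (Or.inl ⟨by simp [avtx], v.isLt, by convert h using 2; simp [liftV]⟩))⟩

lemma psi_not_adj_lift_b (v : Fin (k+2)) : ¬ (Psi f).Adj (liftV v) (bvtx k) := by
  rw [Psi, SimpleGraph.fromRel_adj]
  rintro ⟨hne, (⟨hu, hv, h⟩ | ⟨h, _⟩ | ⟨h, _⟩) | (⟨hu, hv, h⟩ | ⟨h, _⟩ | ⟨h, h2, _⟩)⟩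
  · exact absurd hv (by simp [bvtx])
  · exact absurd h (by simp [liftV] <;> omega)
  · exact absurd h (by simp [liftV] <;> omega)
  · exact absurd hu (by simp [bvtx])
  · exact absurd h (by simp [bvtx] <;> omega)
  · exact absurd h (by simp [bvtx] <;> omega)

lemma psi_adj_a_b : (Psi f).Adj (avtx k) (bvtx k) ↔ Even k := by
  rw [Psi, SimpleGraph.fromRel_adj]
  constructor
  · rintro ⟨hne, (⟨hu, _⟩ | ⟨_, hv, _⟩ | ⟨_, _, h⟩) | (⟨hu, _⟩ | ⟨h, _⟩ | ⟨h, _⟩)⟩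
    · exact absurd hu (by simp [avtx] <;> omega)
    · exact absurd hv (by simp [bvtx])
    · exact h
    · exact absurd hu (by simp [bvtx])
    · exact absurd h (by simp [bvtx] <;> omega)
    · exact absurd h (by simp [bvtx] <;> omega)
  · intro h
    exact ⟨by simp [avtx, bvtx, Fin.ne_iff_vne],
      Or.inl (Or.inr (Or.inr ⟨by simp [avtx], by simp [bvtx], h⟩))⟩

lemma psi_adj_b (u : Fin (k+4)) : (Psi f).Adj (bvtx k) u ↔ (u = avtx k ∧ Even k) := by
  constructor
  · intro h
    rw [Psi, SimpleGraph.fromRel_adj] at h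
    obtain ⟨hne, (⟨hu, _⟩ | ⟨hu, _⟩ | ⟨hu, _⟩) | (⟨_, hv, _⟩ | ⟨hu2, hv, _⟩ | ⟨hu2, hv, hev⟩)⟩ := h
    · exact absurd hu (by simp [bvtx])
    · exact absurd hu (by simp [bvtx] <;> omega)
    · exact absurd hu (by simp [bvtx] <;> omega)
    · exact absurd hv (by simp [bvtx])
    · exact absurd hv (by simp [bvtx] <;> omega)
    · exact ⟨by simp [avtx, Fin.ext_iff]; omega, hev⟩
  · rintro ⟨rfl, hev⟩
    exact ((psi_adj_a_b f).mpr hev).symm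
set_option linter.unnecessarySeqFocus false
set_option linter.unreachableTactic false
set_option linter.unusedTactic false

def liftEmb (k : ℕ) : Fin (k+2) ↪ Fin (k+4) :=
  ⟨liftV, fun x y h => by simpa [liftV, Fin.ext_iff] using h⟩

lemma trichotomy (u : Fin (k+4)) :
    (∃ w : Fin (k+2), u = liftV w) ∨ u = bvtx k ∨ u = avtx k := by
  rcases lt_trichotomy u.val (k+2) with h | h | h
  · exact Or.inl ⟨⟨u.val, h⟩, by simp [liftV, Fin.ext_iff]⟩
  · exact Or.inr (Or.inl (by simp [bvtx, Fin.ext_iff, h]))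
  · exact Or.inr (Or.inr (by simp [avtx, Fin.ext_iff]; omega))

lemma psi_nf_lift (v : Fin (k+2)) :
    (Psi f).neighborFinset (liftV v) =
      ((Hg f).neighborFinset v).map (liftEmb k) ∪
        (if Even ((Hg f).degree v) then {avtx k} else ∅) := by
  ext u
  simp only [SimpleGraph.mem_neighborFinset, Finset.mem_union, Finset.mem_map]
  constructor
  · intro h
    rcases trichotomy u with ⟨w, rfl⟩ | rfl | rfl
    · exact Or.inl ⟨w, (psi_adj_lift f v w).mp h, rfl⟩
    · exact absurd h (psi_not_adj_lift_b f v)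
    · have := (psi_adj_lift_a f v).mp h
      exact Or.inr (by simp [this])
  · rintro (⟨w, hw, rfl⟩ | hu)
    · exact (psi_adj_lift f v w).mpr hw
    · by_cases he : Even ((Hg f).degree v)
      · rw [if_pos he, Finset.mem_singleton] at hu
        subst hu
        exact (psi_adj_lift_a f v).mpr he
      · simp [if_neg he] at hu

lemma psi_deg_lift_odd (v : Fin (k+2)) : Odd ((Psi f).degree (liftV v)) := by
  rw [SimpleGraph.degree, psi_nf_lift f v]
  rw [Finset.card_union_of_disjoint]
  · rw [Finset.card_map]
    by_cases he : Even ((Hg f).degree v)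
    · rw [if_pos he]
      simp only [Finset.card_singleton]
      exact he.add_one
    · rw [if_neg he]
      simpa using Nat.not_even_iff_odd.mp he
  · by_cases he : Even ((Hg f).degree v)
    · rw [if_pos he]
      simp only [Finset.disjoint_singleton_right, Finset.mem_map]
      rintro ⟨w, _, hw⟩
      have : (liftEmb k w).val = k + 3 := by rw [hw]; rfl
      have h7 : (liftEmb k w).val = w.val := rfl; have := w.isLt; omega
    · simp [if_neg he]

lemma psi_nf_a :
    (Psi f).neighborFinset (avtx k) =
      (Finset.univ.filter (fun v => Even ((Hg f).degree v))).map (liftEmb k) ∪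
        (if Even k then {bvtx k} else ∅) := by
  ext u
  simp only [SimpleGraph.mem_neighborFinset, Finset.mem_union, Finset.mem_map,
    Finset.mem_filter, Finset.mem_univ, true_and]
  constructor
  · intro h
    rcases trichotomy u with ⟨w, rfl⟩ | rfl | rfl
    · exact Or.inl ⟨w, (psi_adj_lift_a f w).mp h.symm, rfl⟩
    · have := (psi_adj_a_b f).mp h
      exact Or.inr (by simp [this])
    · exact absurd h ((Psi f).loopless.irrefl _)
  · rintro (⟨w, hw, rfl⟩ | hu)
    · exact ((psi_adj_lift_a f w).mpr hw).symm
    · by_cases he : Even k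
      · rw [if_pos he, Finset.mem_singleton] at hu
        subst hu
        exact (psi_adj_a_b f).mpr he
      · simp [if_neg he] at hu

lemma psi_deg_a_odd : Odd ((Psi f).degree (avtx k)) := by
  rw [SimpleGraph.degree, psi_nf_a f]
  have hdisj : Disjoint ((Finset.univ.filter (fun v => Even ((Hg f).degree v))).map (liftEmb k))
      (if Even k then ({bvtx k} : Finset (Fin (k+4))) else ∅) := by
    by_cases he : Even k
    · rw [if_pos he]
      simp only [Finset.disjoint_singleton_right, Finset.mem_map]
      rintro ⟨w, _, hw⟩
      have : (liftEmb k w).val = k + 2 := by rw [hw]; rfl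
      have h7 : (liftEmb k w).val = w.val := rfl; have := w.isLt; omega
    · simp [if_neg he]
  rw [Finset.card_union_of_disjoint hdisj, Finset.card_map]
  have hsplit := Finset.card_filter_add_card_filter_not
    (s := (Finset.univ : Finset (Fin (k+2)))) (p := fun v => Even ((Hg f).degree v))
  have hodd : Even ((Finset.univ.filter (fun v => ¬ Even ((Hg f).degree v))).card) := by
    have := (Hg f).even_card_odd_degree_vertices
    convert this using 2
    ext v
    simp [Nat.not_even_iff_odd]
  rw [Finset.card_univ, Fintype.card_fin] at hsplit
  obtain ⟨c, hc⟩ := hodd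
  by_cases he : Even k
  · rw [if_pos he]
    simp only [Finset.card_singleton]
    obtain ⟨d, hd⟩ := he
    rw [Nat.odd_iff]
    omega
  · rw [if_neg he]
    simp only [Finset.card_empty, add_zero]
    rw [Nat.odd_iff]
    rw [Nat.not_even_iff] at he
    omega

lemma psi_deg_b_odd (he : Even k) : Odd ((Psi f).degree (bvtx k)) := by
  have hnf : (Psi f).neighborFinset (bvtx k) = {avtx k} := by
    ext u
    simp only [SimpleGraph.mem_neighborFinset, Finset.mem_singleton, psi_adj_b f u,
      and_iff_left he]
  rw [SimpleGraph.degree, hnf]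
  simp

lemma psi_bad : ¬ EvenDegenerate (Psi f) := by
  apply bad_aux (by omega) (Psi f) (bvtx k)
  · intro v hv
    rcases trichotomy v with ⟨w, rfl⟩ | rfl | rfl
    · exact psi_deg_lift_odd f w
    · exact absurd rfl hv
    · exact psi_deg_a_odd f
  · by_cases he : Even k
    · exact Or.inl (psi_deg_b_odd f he)
    · refine Or.inr fun x hx => he ((psi_adj_b f x).mp hx).2

lemma psi_inj : Function.Injective (Psi (k := k)) := by
  intro f g h
  apply Hg_inj
  ext x y
  rw [← psi_adj_lift f, ← psi_adj_lift g, h]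

lemma card_bad_ge :
    2 ^ ((k+2).choose 2) ≤
      (Finset.univ.filter (fun G : SimpleGraph (Fin (k+4)) => ¬ EvenDegenerate G)).card := by
  have hcard : Fintype.card ({e : Sym2 (Fin (k+2)) // ¬ e.IsDiag} → Bool)
      = 2 ^ ((k+2).choose 2) := by
    rw [Fintype.card_fun, Fintype.card_bool, Sym2.card_subtype_not_diag, Fintype.card_fin]
  rw [← hcard, ← Finset.card_univ]
  apply Finset.card_le_card_of_injOn Psi
  · intro f _
    simp only [Finset.coe_filter, Finset.mem_univ, true_and, Set.mem_setOf_eq]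
    exact psi_bad f
  · exact Function.Injective.injOn psi_inj

lemma choose_arith : (k+4).choose 2 = (k+2).choose 2 + (2*(k+4)-3) := by
  rw [Nat.choose_two_right, Nat.choose_two_right]
  have h3 : k+4-1 = k+3 := by omega
  have h1 : k+2-1 = k+1 := by omega
  rw [h3, h1]
  have h2 : (k+4)*(k+3) = (k+2)*(k+1) + 2*(2*(k+4)-3) := by
    have h4 : 2*(k+4)-3 = 2*k+5 := by omega
    rw [h4]; ring
  omega

lemma edge_ncard_le (G : SimpleGraph (Fin (k+4))) :
    G.edgeSet.ncard ≤ (k+4).choose 2 := by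
  rw [Set.ncard_eq_toFinset_card', Set.toFinset_card]
  have h := G.card_edgeFinset_le_card_choose_two
  rw [Fintype.card_fin] at h
  have h2 : G.edgeFinset.card = Fintype.card G.edgeSet := Set.toFinset_card _
  omega

/-- For every `n ≥ 4` and `G ~ G(n, 1/2)`, the probability that `G` is not even-degenerate is
at least `(1/2)^{2n - 3}`. -/
theorem not_even_degenerate_lower_bound :
    ∀ n : ℕ, 4 ≤ n →
      (1 / 2 : ℝ) ^ (2 * n - 3) ≤ prob n (1 / 2) (fun G => ¬ EvenDegenerate G) := by
  intro n hn
  obtain ⟨k, rfl⟩ : ∃ k, n = k + 4 := ⟨n - 4, by omega⟩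
  have h1 : prob (k+4) (1/2) (fun G => ¬ EvenDegenerate G)
      = ((Finset.univ.filter
          (fun G : SimpleGraph (Fin (k+4)) => ¬ EvenDegenerate G)).card : ℝ)
        * (1/2) ^ ((k+4).choose 2) := by
    unfold prob
    beta_reduce
    trans (∑ G : SimpleGraph (Fin (k+4)),
        if ¬ EvenDegenerate G then ((1/2 : ℝ)) ^ ((k+4).choose 2) else 0)
    · refine Finset.sum_congr rfl fun G _ => ?_
      by_cases h : ¬ EvenDegenerate G
      · rw [if_pos h, if_pos h, show (1 - (1/2) : ℝ) = 1/2 by norm_num, ← pow_add,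
          Nat.add_sub_cancel' (edge_ncard_le G)]
      · rw [if_neg h, if_neg h]
    · rw [← Finset.sum_filter, Finset.sum_const, nsmul_eq_mul]
  rw [h1]
  have h2 : ((2:ℝ) ^ ((k+2).choose 2)) ≤ ((Finset.univ.filter
      (fun G : SimpleGraph (Fin (k+4)) => ¬ EvenDegenerate G)).card : ℝ) := by
    have := card_bad_ge (k := k)
    calc ((2:ℝ) ^ ((k+2).choose 2)) = ((2 ^ ((k+2).choose 2) : ℕ) : ℝ) := by push_cast; ring
      _ ≤ _ := by exact_mod_cast this
  calc (1/2 : ℝ) ^ (2 * (k+4) - 3)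
      = (2:ℝ) ^ ((k+2).choose 2) * (1/2) ^ ((k+4).choose 2) := by
        rw [choose_arith, pow_add, ← mul_assoc, ← mul_pow]
        norm_num
    _ ≤ _ := by
        apply mul_le_mul_of_nonneg_right h2
        positivity
end

section
/- For any finite graph G and any set S of vertices of G, there is a subset Q ⊆ S whose removal from G is admissible, such that the vertices of S \ Q form a clique in the remaining graph G − Q and every vertex of S \ Q has odd degree in G − Q. -/
/-- The removal of `S` from the graph `G` restricted to the remaining vertex set `W` is simple
admissible: `S ⊆ W`, `S` is independent, and the number of edges between `S` and `W \ S`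
is even. -/
def SimpleAdmissibleIn {V : Type*} (G : SimpleGraph V) (W S : Set V) : Prop :=
  S ⊆ W ∧ (∀ u ∈ S, ∀ v ∈ S, ¬ G.Adj u v) ∧
    Even ({p : V × V | G.Adj p.1 p.2 ∧ p.1 ∈ S ∧ p.2 ∈ W \ S}.ncard)

/-- The removal of `S` from the graph `G` restricted to the remaining vertex set `W` is
admissible: it is realized by a sequence of simple admissible removals. -/
def AdmissibleIn {V : Type*} (G : SimpleGraph V) (W S : Set V) : Prop :=
  ∃ (k : ℕ) (Ss : ℕ → Set V),
    (∀ i < k, SimpleAdmissibleIn G (W \ ⋃ j ∈ Finset.range i, Ss j) (Ss i)) ∧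
    (⋃ i ∈ Finset.range k, Ss i) = S

/-- The removal of `S` from the graph `G` is admissible. -/
def Admissible {V : Type*} (G : SimpleGraph V) (S : Set V) : Prop :=
  AdmissibleIn G Set.univ S

/-- The degree of `v` in the graph `G` restricted to the remaining vertex set `W`. -/
noncomputable def degIn {V : Type*} (G : SimpleGraph V) (W : Set V) (v : V) : ℕ :=
  (G.neighborSet v ∩ W).ncard

lemma admissibleIn_empty {V : Type*} (G : SimpleGraph V) (W : Set V) :
    AdmissibleIn G W ∅ :=
  ⟨0, fun _ => ∅, by simp, by simp⟩

lemma union_shift {V : Type*} (T : Set V) (Ss : ℕ → Set V) (m : ℕ) :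
    (⋃ j ∈ Finset.range (m + 1), (if j = 0 then T else Ss (j - 1)))
      = T ∪ ⋃ j ∈ Finset.range m, Ss j := by
  ext x
  simp only [Set.mem_iUnion, Finset.mem_range, Set.mem_union]
  constructor
  · rintro ⟨j, hj, hx⟩
    cases j with
    | zero => left; simpa using hx
    | succ n => right; exact ⟨n, by omega, by simpa using hx⟩
  · rintro (hx | ⟨j, hj, hx⟩)
    · exact ⟨0, by omega, by simpa using hx⟩
    · exact ⟨j + 1, by omega, by simpa using hx⟩

lemma admissibleIn_cons {V : Type*} (G : SimpleGraph V) (W T Q : Set V)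
    (hT : SimpleAdmissibleIn G W T) (hQ : AdmissibleIn G (W \ T) Q) :
    AdmissibleIn G W (T ∪ Q) := by
  obtain ⟨k, Ss, h1, h2⟩ := hQ
  refine ⟨k + 1, fun i => if i = 0 then T else Ss (i - 1), ?_, ?_⟩
  · intro i hi
    match i with
    | 0 => simpa using hT
    | (m + 1) =>
      have h := h1 m (by omega)
      simp only [Nat.add_sub_cancel, if_neg (Nat.succ_ne_zero m)]
      rw [union_shift, ← Set.diff_diff]
      exact h
  · rw [union_shift, h2]

lemma singleton_pairset {V : Type*} (G : SimpleGraph V) (W : Set V) (v : V) :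
    {p : V × V | G.Adj p.1 p.2 ∧ p.1 ∈ ({v} : Set V) ∧ p.2 ∈ W \ {v}}
      = Prod.mk v '' (G.neighborSet v ∩ W) := by
  ext ⟨a, b⟩
  simp only [Set.mem_setOf_eq, Set.mem_singleton_iff, Set.mem_diff, Set.mem_image,
    Set.mem_inter_iff, SimpleGraph.mem_neighborSet, Prod.mk.injEq]
  constructor
  · rintro ⟨hadj, rfl, hbW, -⟩
    exact ⟨b, ⟨hadj, hbW⟩, rfl, rfl⟩
  · rintro ⟨x, ⟨hadj, hxW⟩, rfl, rfl⟩
    exact ⟨hadj, rfl, hxW, fun h => G.ne_of_adj hadj h.symm⟩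

lemma simpleAdmissible_singleton {V : Type*} [Fintype V] (G : SimpleGraph V) (W : Set V)
    (v : V) (hvW : v ∈ W) (heven : Even (degIn G W v)) :
    SimpleAdmissibleIn G W {v} := by
  refine ⟨by simpa using hvW, ?_, ?_⟩
  · rintro a ha b hb
    simp only [Set.mem_singleton_iff] at ha hb
    subst ha; subst hb; exact G.irrefl
  · rw [singleton_pairset, Set.ncard_image_of_injective _ (Prod.mk_right_injective v)]
    exact heven

lemma pair_pairset {V : Type*} (G : SimpleGraph V) (W : Set V) (u v : V)
    (hnadj : ¬ G.Adj u v) :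
    {p : V × V | G.Adj p.1 p.2 ∧ p.1 ∈ ({u, v} : Set V) ∧ p.2 ∈ W \ {u, v}}
      = Prod.mk u '' (G.neighborSet u ∩ W) ∪ Prod.mk v '' (G.neighborSet v ∩ W) := by
  have hnadj' : ¬ G.Adj v u := fun h => hnadj h.symm
  ext ⟨a, b⟩
  simp only [Set.mem_setOf_eq, Set.mem_insert_iff, Set.mem_singleton_iff, Set.mem_diff,
    Set.mem_union, Set.mem_image, Set.mem_inter_iff, SimpleGraph.mem_neighborSet,
    Prod.mk.injEq]
  constructor
  · rintro ⟨hadj, (rfl | rfl), hbW, -⟩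
    · exact Or.inl ⟨b, ⟨hadj, hbW⟩, rfl, rfl⟩
    · exact Or.inr ⟨b, ⟨hadj, hbW⟩, rfl, rfl⟩
  · rintro (⟨x, ⟨hadj, hxW⟩, rfl, rfl⟩ | ⟨x, ⟨hadj, hxW⟩, rfl, rfl⟩)
    · refine ⟨hadj, Or.inl rfl, hxW, ?_⟩
      rintro (rfl | rfl)
      · exact G.irrefl hadj
      · exact hnadj hadj
    · refine ⟨hadj, Or.inr rfl, hxW, ?_⟩
      rintro (rfl | rfl)
      · exact hnadj' hadj
      · exact G.irrefl hadj

lemma simpleAdmissible_pair {V : Type*} [Fintype V] (G : SimpleGraph V) (W : Set V)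
    (u v : V) (huW : u ∈ W) (hvW : v ∈ W) (hne : u ≠ v) (hnadj : ¬ G.Adj u v)
    (hu : Odd (degIn G W u)) (hv : Odd (degIn G W v)) :
    SimpleAdmissibleIn G W ({u, v} : Set V) := by
  refine ⟨?_, ?_, ?_⟩
  · rintro x (rfl | rfl)
    · exact huW
    · exact hvW
  · rintro a (rfl | rfl) b (rfl | rfl)
    · exact G.irrefl
    · exact hnadj
    · exact fun h => hnadj h.symm
    · exact G.irrefl
  · rw [pair_pairset G W u v hnadj, Set.ncard_union_eq, Set.ncard_image_of_injective _
      (Prod.mk_right_injective u), Set.ncard_image_of_injective _ (Prod.mk_right_injective v)]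
    · exact hu.add_odd hv
    · rw [Set.disjoint_left]
      rintro p ⟨x, -, rfl⟩ ⟨y, -, h⟩
      exact hne (congrArg Prod.fst h).symm

lemma greedy_aux {V : Type*} [Fintype V] (G : SimpleGraph V) :
    ∀ n (W S : Set V), S ⊆ W → S.ncard ≤ n →
      ∃ Q ⊆ S, AdmissibleIn G W Q ∧ G.IsClique (S \ Q) ∧
        ∀ v ∈ S \ Q, Odd (degIn G (W \ Q) v) := by
  intro n
  induction n with
  | zero =>
    intro W S hSW hcard
    have hS : S = ∅ := (Set.ncard_eq_zero (Set.toFinite S)).mp (Nat.le_zero.mp hcard)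
    subst hS
    exact ⟨∅, Set.Subset.rfl, admissibleIn_empty G W, by simp [SimpleGraph.isClique_iff],
      by simp⟩
  | succ n ih =>
    intro W S hSW hcard
    by_cases hodd : ∀ v ∈ S, Odd (degIn G W v)
    · by_cases hcl : G.IsClique S
      · refine ⟨∅, Set.empty_subset S, admissibleIn_empty G W, by simpa using hcl, ?_⟩
        intro v hv
        rw [Set.diff_empty] at hv ⊢
        exact hodd v hv
      · rw [SimpleGraph.isClique_iff, Set.Pairwise] at hcl
        push_neg at hcl
        obtain ⟨u, hu, v, hv, hne, hnadj⟩ := hcl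
        have hT : SimpleAdmissibleIn G W ({u, v} : Set V) :=
          simpleAdmissible_pair G W u v (hSW hu) (hSW hv) hne hnadj
            (hodd u hu) (hodd v hv)
        have hsub : S \ ({u, v} : Set V) ⊆ W \ ({u, v} : Set V) :=
          Set.diff_subset_diff_left hSW
        have hcard' : (S \ ({u, v} : Set V)).ncard ≤ n := by
          have h1 : (S \ ({u, v} : Set V)).ncard ≤ (S \ {u}).ncard :=
            Set.ncard_le_ncard (by
              intro x hx
              exact ⟨hx.1, fun h => hx.2 (Or.inl h)⟩) (Set.toFinite _)
          have h2 : (S \ ({u} : Set V)).ncard < S.ncard :=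
            Set.ncard_diff_singleton_lt_of_mem hu (Set.toFinite S)
          omega
        obtain ⟨Q', hQ'sub, hadm, hclq, hdeg⟩ := ih (W \ {u, v}) (S \ {u, v}) hsub hcard'
        refine ⟨({u, v} : Set V) ∪ Q', ?_, admissibleIn_cons G W _ _ hT hadm, ?_, ?_⟩
        · rintro x (hx | hx)
          · rcases hx with rfl | rfl
            · exact hu
            · exact hv
          · exact (Set.diff_subset) (hQ'sub hx)
        · rwa [← Set.diff_diff]
        · intro x hx
          rw [← Set.diff_diff] at hx ⊢
          exact hdeg x hx
    · push_neg at hodd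
      obtain ⟨v, hv, hveven⟩ := hodd
      rw [Nat.not_odd_iff_even] at hveven
      have hT : SimpleAdmissibleIn G W ({v} : Set V) :=
        simpleAdmissible_singleton G W v (hSW hv) hveven
      have hsub : S \ ({v} : Set V) ⊆ W \ ({v} : Set V) := Set.diff_subset_diff_left hSW
      have hcard' : (S \ ({v} : Set V)).ncard ≤ n := by
        have h2 : (S \ ({v} : Set V)).ncard < S.ncard :=
          Set.ncard_diff_singleton_lt_of_mem hv (Set.toFinite S)
        omega
      obtain ⟨Q', hQ'sub, hadm, hclq, hdeg⟩ := ih (W \ {v}) (S \ {v}) hsub hcard'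
      refine ⟨({v} : Set V) ∪ Q', ?_, admissibleIn_cons G W _ _ hT hadm, ?_, ?_⟩
      · rintro x (rfl | hx)
        · exact hv
        · exact (Set.diff_subset) (hQ'sub hx)
      · rwa [← Set.diff_diff]
      · intro x hx
        rw [← Set.diff_diff] at hx ⊢
        exact hdeg x hx

/-- Greedy admissible removal: for any set `S` of vertices of a finite graph `G`, we may
admissibly remove a set `Q ⊆ S` of vertices such that the remaining vertices of `S` form a
clique in the remaining graph and all have odd degree in the remaining graph. -/
theorem greedy_admissible_removal {V : Type*} [Fintype V] (G : SimpleGraph V) (S : Set V) :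
    ∃ Q ⊆ S, Admissible G Q ∧ G.IsClique (S \ Q) ∧
      ∀ v ∈ S \ Q, Odd (degIn G (Set.univ \ Q) v) := by
  obtain ⟨Q, hQS, hadm, hcl, hdeg⟩ :=
    greedy_aux G S.ncard Set.univ S (Set.subset_univ S) le_rfl
  exact ⟨Q, hQS, hadm, hcl, hdeg⟩
end

section
/- Let G be a finite graph, let A and B be disjoint independent sets in G each of size at least two, and let v be a vertex outside A ∪ B. Assume every vertex a ∈ A has both a neighbour and a non-neighbour in B, and every vertex b ∈ B has both a neighbour and a non-neighbour in A. Then there is a set Q ⊆ A ∪ B ∪ {v} whose removal from G is admissible, with v ∈ Q, |Q ∩ A| ≤ 2 and |Q ∩ B| ≤ 2. -/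
section Helpers

variable {V : Type*} [Fintype V] {G : SimpleGraph V}
set_option linter.unusedSectionVars false

lemma cross_singleton (G : SimpleGraph V) (W : Set V) (x : V) :
    {p : V × V | G.Adj p.1 p.2 ∧ p.1 ∈ ({x} : Set V) ∧ p.2 ∈ W \ ({x} : Set V)}.ncard
      = degIn G W x := by
  have hset : {p : V × V | G.Adj p.1 p.2 ∧ p.1 ∈ ({x} : Set V) ∧ p.2 ∈ W \ ({x} : Set V)}
      = (fun y => (x, y)) '' (G.neighborSet x ∩ W) := by
    ext ⟨p, q⟩
    simp only [Set.mem_setOf_eq, Set.mem_singleton_iff, Set.mem_diff, Set.mem_image,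
      Set.mem_inter_iff, SimpleGraph.mem_neighborSet, Prod.mk.injEq]
    constructor
    · rintro ⟨hadj, rfl, hq, hne⟩; exact ⟨q, ⟨hadj, hq⟩, rfl, rfl⟩
    · rintro ⟨y, ⟨hadj, hy⟩, rfl, rfl⟩
      exact ⟨hadj, rfl, hy, fun h => G.irrefl (h ▸ hadj)⟩
  rw [hset, Set.ncard_image_of_injective _ (fun a b h => by simpa using h)]
  rfl

lemma cross_pair (G : SimpleGraph V) (W : Set V) {x y : V} (hne : x ≠ y)
    (hadj : ¬ G.Adj x y) :
    {p : V × V | G.Adj p.1 p.2 ∧ p.1 ∈ ({x, y} : Set V) ∧ p.2 ∈ W \ ({x, y} : Set V)}.ncard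
      = degIn G W x + degIn G W y := by
  have hset : {p : V × V | G.Adj p.1 p.2 ∧ p.1 ∈ ({x, y} : Set V) ∧ p.2 ∈ W \ ({x, y} : Set V)}
      = ((fun z => (x, z)) '' (G.neighborSet x ∩ W)) ∪
        ((fun z => (y, z)) '' (G.neighborSet y ∩ W)) := by
    ext ⟨p, q⟩
    simp only [Set.mem_setOf_eq, Set.mem_insert_iff, Set.mem_singleton_iff, Set.mem_diff,
      Set.mem_union, Set.mem_image, Set.mem_inter_iff, SimpleGraph.mem_neighborSet,
      Prod.mk.injEq]
    constructor
    · rintro ⟨ha, (rfl | rfl), hq, hne'⟩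
      · exact Or.inl ⟨q, ⟨ha, hq⟩, rfl, rfl⟩
      · exact Or.inr ⟨q, ⟨ha, hq⟩, rfl, rfl⟩
    · rintro (⟨z, ⟨ha, hz⟩, rfl, rfl⟩ | ⟨z, ⟨ha, hz⟩, rfl, rfl⟩)
      · refine ⟨ha, Or.inl rfl, hz, ?_⟩
        rintro (rfl | rfl)
        · exact G.irrefl ha
        · exact hadj ha
      · refine ⟨ha, Or.inr rfl, hz, ?_⟩
        rintro (rfl | rfl)
        · exact hadj ha.symm
        · exact G.irrefl ha
  rw [hset, Set.ncard_union_eq ?_ (Set.toFinite _) (Set.toFinite _),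
    Set.ncard_image_of_injective _ (fun a b h => by simpa using h),
    Set.ncard_image_of_injective _ (fun a b h => by simpa using h)]
  · rfl
  · rw [Set.disjoint_left]
    rintro ⟨p, q⟩ h1 h2
    simp only [Set.mem_image] at h1 h2
    obtain ⟨z, _, hz⟩ := h1
    obtain ⟨w, _, hw⟩ := h2
    apply hne
    rw [← hz] at hw
    exact (Prod.mk.injEq _ _ _ _ ▸ hw).1.symm

lemma simpleAdmissibleIn_singleton {W : Set V} {x : V} (hx : x ∈ W)
    (h : Even (degIn G W x)) : SimpleAdmissibleIn G W {x} := by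
  refine ⟨by simpa using hx, ?_, ?_⟩
  · intro u hu w hw
    rw [Set.mem_singleton_iff] at hu hw
    subst hu; subst hw; exact G.irrefl
  · rw [cross_singleton]; exact h

lemma simpleAdmissibleIn_pair {W : Set V} {x y : V} (hx : x ∈ W) (hy : y ∈ W)
    (hne : x ≠ y) (hadj : ¬ G.Adj x y) (h : Even (degIn G W x + degIn G W y)) :
    SimpleAdmissibleIn G W {x, y} := by
  refine ⟨?_, ?_, ?_⟩
  · rintro z (rfl | rfl)
    · exact hx
    · exact hy
  · rintro u (rfl | rfl) w (rfl | rfl)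
    · exact G.irrefl
    · exact hadj
    · exact fun h' => hadj h'.symm
    · exact G.irrefl
  · rw [cross_pair G W hne hadj]; exact h

lemma degIn_diff_adj {W : Set V} {x a : V} (h : G.Adj x a) (ha : a ∈ W) :
    degIn G (W \ {a}) x + 1 = degIn G W x := by
  have hs : G.neighborSet x ∩ (W \ {a}) = (G.neighborSet x ∩ W) \ {a} := by
    ext z
    simp only [Set.mem_inter_iff, Set.mem_diff, Set.mem_singleton_iff]
    tauto
  have hmem : a ∈ G.neighborSet x ∩ W := ⟨h, ha⟩
  rw [degIn, hs, Set.ncard_diff_singleton_add_one hmem (Set.toFinite _)]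
  rfl

lemma degIn_diff_not_adj {W : Set V} {x a : V} (h : ¬ G.Adj x a) :
    degIn G (W \ {a}) x = degIn G W x := by
  have hs : G.neighborSet x ∩ (W \ {a}) = G.neighborSet x ∩ W := by
    ext z
    simp only [Set.mem_inter_iff, Set.mem_diff, Set.mem_singleton_iff,
      SimpleGraph.mem_neighborSet]
    constructor
    · rintro ⟨h1, h2, _⟩; exact ⟨h1, h2⟩
    · rintro ⟨h1, h2⟩
      exact ⟨h1, h2, fun hz => h (hz ▸ h1)⟩
  rw [degIn, hs]; rfl

lemma admissible_one (S₀ : Set V) (h0 : SimpleAdmissibleIn G Set.univ S₀) :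
    Admissible G S₀ := by
  refine ⟨1, fun _ => S₀, ?_, by simp⟩
  intro i hi
  interval_cases i
  simpa using h0

lemma admissible_two (S₀ S₁ : Set V) (h0 : SimpleAdmissibleIn G Set.univ S₀)
    (h1 : SimpleAdmissibleIn G (Set.univ \ S₀) S₁) :
    Admissible G (S₀ ∪ S₁) := by
  refine ⟨2, fun i => if i = 0 then S₀ else S₁, ?_, ?_⟩
  · intro i hi
    interval_cases i
    · simpa using h0
    · simpa [Finset.range_add_one] using h1
  · ext z
    simp [Finset.range_add_one]
    tauto

lemma admissible_three (S₀ S₁ S₂ : Set V) (h0 : SimpleAdmissibleIn G Set.univ S₀)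
    (h1 : SimpleAdmissibleIn G (Set.univ \ S₀) S₁)
    (h2 : SimpleAdmissibleIn G (Set.univ \ (S₀ ∪ S₁)) S₂) :
    Admissible G (S₀ ∪ S₁ ∪ S₂) := by
  refine ⟨3, fun i => if i = 0 then S₀ else if i = 1 then S₁ else S₂, ?_, ?_⟩
  · intro i hi
    interval_cases i
    · simpa using h0
    · simpa [Finset.range_add_one] using h1
    · have hU : (⋃ j ∈ Finset.range 2, (if j = 0 then S₀ else if j = 1 then S₁ else S₂)) = S₀ ∪ S₁ := by
        ext z; simp [Finset.range_add_one]; tauto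
      rw [hU]
      simpa using h2
  · ext z
    simp [Finset.range_add_one]
    tauto

lemma ncard_le_two_of_subset_pair {s : Set V} {x y : V} (h : s ⊆ {x, y}) : s.ncard ≤ 2 :=
  (Set.ncard_le_ncard h (Set.toFinite _)).trans
    ((Set.ncard_insert_le x ({y} : Set V)).trans (by simp))

end Helpers

/-- Absorbing a vertex: if `A` and `B` are disjoint independent sets of size at least two, each
vertex of `A` has a neighbour and a non-neighbour in `B` and vice versa, and `v ∉ A ∪ B`, then
there is an admissible removal of a set `Q ⊆ A ∪ B ∪ {v}` containing `v` with at most two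
vertices removed from each of `A` and `B`. -/
theorem absorb_vertex {V : Type*} [Fintype V] (G : SimpleGraph V) (A B : Set V) (v : V)
    (hdisj : Disjoint A B)
    (hAind : ∀ a ∈ A, ∀ a' ∈ A, ¬ G.Adj a a')
    (hBind : ∀ b ∈ B, ∀ b' ∈ B, ¬ G.Adj b b')
    (hA2 : 2 ≤ A.ncard) (hB2 : 2 ≤ B.ncard)
    (hv : v ∉ A ∪ B)
    (hAB : ∀ a ∈ A, (∃ b ∈ B, G.Adj a b) ∧ (∃ b ∈ B, ¬ G.Adj a b))
    (hBA : ∀ b ∈ B, (∃ a ∈ A, G.Adj b a) ∧ (∃ a ∈ A, ¬ G.Adj b a)) :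
    ∃ Q ⊆ A ∪ B ∪ {v}, Admissible G Q ∧ v ∈ Q ∧
      (Q ∩ A).ncard ≤ 2 ∧ (Q ∩ B).ncard ≤ 2 := by
  classical
  have hvA : v ∉ A := fun h => hv (Or.inl h)
  have hvB : v ∉ B := fun h => hv (Or.inr h)
  have hABne : ∀ a ∈ A, ∀ b ∈ B, a ≠ b := fun a ha b hb h =>
    (Set.disjoint_left.1 hdisj ha) (h ▸ hb)
  by_cases hdv : Even (degIn G Set.univ v)
  · -- d(v) even : remove {v}
    refine ⟨{v}, ?_, admissible_one _ (simpleAdmissibleIn_singleton (Set.mem_univ v) hdv),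
      rfl, ?_, ?_⟩
    · intro z hz; rw [Set.mem_singleton_iff] at hz; subst hz; exact Or.inr rfl
    · refine ncard_le_two_of_subset_pair (x := v) (y := v) ?_
      intro z hz; exact Or.inl hz.1
    · refine ncard_le_two_of_subset_pair (x := v) (y := v) ?_
      intro z hz; exact Or.inl hz.1
  -- d(v) odd
  by_cases hα : ∃ y, (y ∈ A ∨ y ∈ B) ∧ ¬ G.Adj v y ∧ ¬ Even (degIn G Set.univ y)
  · -- α : a non-neighbour of v of odd degree : remove {v, y}
    obtain ⟨y, hy, hvy, hody⟩ := hα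
    have hyv : v ≠ y := by
      rintro rfl
      rcases hy with h | h
      · exact hvA h
      · exact hvB h
    refine ⟨{v, y}, ?_, admissible_one _ (simpleAdmissibleIn_pair (Set.mem_univ v)
      (Set.mem_univ y) hyv hvy ?_), Or.inl rfl, ?_, ?_⟩
    · rintro z (rfl | rfl)
      · exact Or.inr rfl
      · rcases hy with h | h
        · exact Or.inl (Or.inl h)
        · exact Or.inl (Or.inr h)
    · simp only [Nat.even_iff] at hdv hody ⊢; omega
    · refine ncard_le_two_of_subset_pair (x := y) (y := y) ?_
      rintro z ⟨hz, hzA⟩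
      rcases hz with rfl | rfl
      · exact absurd hzA hvA
      · exact Or.inl rfl
    · refine ncard_le_two_of_subset_pair (x := y) (y := y) ?_
      rintro z ⟨hz, hzB⟩
      rcases hz with rfl | rfl
      · exact absurd hzB hvB
      · exact Or.inl rfl
  by_cases hβ : ∃ x, (x ∈ A ∨ x ∈ B) ∧ G.Adj v x ∧ Even (degIn G Set.univ x)
  · -- β : a neighbour of v of even degree : remove {x}, then {v}
    obtain ⟨x, hx, hvx, hex⟩ := hβ
    have hxv : v ≠ x := by
      rintro rfl
      rcases hx with h | h
      · exact hvA h
      · exact hvB h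
    have e1 : degIn G (Set.univ \ {x}) v + 1 = degIn G Set.univ v :=
      degIn_diff_adj hvx (Set.mem_univ x)
    refine ⟨{x} ∪ {v}, ?_, admissible_two _ _
      (simpleAdmissibleIn_singleton (Set.mem_univ x) hex)
      (simpleAdmissibleIn_singleton ⟨Set.mem_univ v, by simpa using hxv⟩ ?_), Or.inr rfl, ?_, ?_⟩
    · rintro z (rfl | rfl)
      · rcases hx with h | h
        · exact Or.inl (Or.inl h)
        · exact Or.inl (Or.inr h)
      · exact Or.inr rfl
    · simp only [Nat.even_iff] at hdv ⊢; omega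
    · refine ncard_le_two_of_subset_pair (x := x) (y := x) ?_
      rintro z ⟨hz, hzA⟩
      rcases hz with rfl | rfl
      · exact Or.inl rfl
      · exact absurd hzA hvA
    · refine ncard_le_two_of_subset_pair (x := x) (y := x) ?_
      rintro z ⟨hz, hzB⟩
      rcases hz with rfl | rfl
      · exact Or.inl rfl
      · exact absurd hzB hvB
  -- now every vertex of A ∪ B : odd degree ↔ neighbour of v
  push_neg at hα hβ
  have hOdd : ∀ y, (y ∈ A ∨ y ∈ B) → ¬ Even (degIn G Set.univ y) → G.Adj v y := by
    intro y hy hody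
    by_contra hnadj
    exact hody (hα y hy hnadj)
  by_cases hγ1 : ∃ a ∈ A, Even (degIn G Set.univ a)
  · -- an even vertex a in A, with neighbour b in B
    obtain ⟨a, haA, hea⟩ := hγ1
    have hva : ¬ G.Adj v a := fun h => hβ a (Or.inl haA) h hea
    obtain ⟨b, hbB, hab⟩ := (hAB a haA).1
    have hba : a ≠ b := hABne a haA b hbB
    have hvnea : v ≠ a := fun h => hvA (h ▸ haA)
    have hvneb : v ≠ b := fun h => hvB (h ▸ hbB)
    have edb : degIn G (Set.univ \ {a}) b + 1 = degIn G Set.univ b :=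
      degIn_diff_adj hab.symm (Set.mem_univ a)
    have edv : degIn G (Set.univ \ {a}) v = degIn G Set.univ v :=
      degIn_diff_not_adj hva
    by_cases heb : Even (degIn G Set.univ b)
    · -- remove {a}, then {v, b}
      have hvb : ¬ G.Adj v b := fun h => hβ b (Or.inr hbB) h heb
      refine ⟨{a} ∪ {v, b}, ?_, admissible_two _ _
        (simpleAdmissibleIn_singleton (Set.mem_univ a) hea)
        (simpleAdmissibleIn_pair ⟨Set.mem_univ v, by simpa using hvnea⟩
          ⟨Set.mem_univ b, by simpa using hba.symm⟩ hvneb hvb ?_),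
        Or.inr (Or.inl rfl), ?_, ?_⟩
      · rintro z (rfl | rfl | rfl)
        · exact Or.inl (Or.inl haA)
        · exact Or.inr rfl
        · exact Or.inl (Or.inr hbB)
      · simp only [Nat.even_iff] at hdv heb ⊢; omega
      · refine ncard_le_two_of_subset_pair (x := a) (y := a) ?_
        rintro z ⟨hz, hzA⟩
        rcases hz with rfl | rfl | rfl
        · exact Or.inl rfl
        · exact absurd hzA hvA
        · exact (hABne _ hzA _ hbB rfl).elim
      · refine ncard_le_two_of_subset_pair (x := b) (y := b) ?_
        rintro z ⟨hz, hzB⟩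
        rcases hz with rfl | rfl | rfl
        · exact (hABne _ haA _ hzB rfl).elim
        · exact absurd hzB hvB
        · exact Or.inl rfl
    · -- b odd, hence a neighbour of v : remove {a}, {b}, {v}
      have hvb : G.Adj v b := hOdd b (Or.inr hbB) heb
      have hW1 : (Set.univ \ {a}) \ {b} = Set.univ \ (({a} : Set V) ∪ {b}) := by
        rw [Set.diff_diff]
      have edvb : degIn G ((Set.univ \ {a}) \ {b}) v + 1 = degIn G (Set.univ \ {a}) v :=
        degIn_diff_adj hvb ⟨Set.mem_univ b, by simpa using hba.symm⟩
      refine ⟨{a} ∪ {b} ∪ {v}, ?_, admissible_three _ _ _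
        (simpleAdmissibleIn_singleton (Set.mem_univ a) hea)
        (simpleAdmissibleIn_singleton ⟨Set.mem_univ b, by simpa using hba.symm⟩ ?_)
        (by
          rw [← hW1]
          refine simpleAdmissibleIn_singleton ⟨⟨Set.mem_univ v, by simpa using hvnea⟩,
            by simpa using hvneb⟩ ?_
          simp only [Nat.even_iff] at hdv ⊢; omega),
        Or.inr rfl, ?_, ?_⟩
      · rintro z ((rfl | rfl) | rfl)
        · exact Or.inl (Or.inl haA)
        · exact Or.inl (Or.inr hbB)
        · exact Or.inr rfl
      · simp only [Nat.even_iff] at heb ⊢; omega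
      · refine ncard_le_two_of_subset_pair (x := a) (y := a) ?_
        rintro z ⟨hz, hzA⟩
        rcases hz with (rfl | rfl) | rfl
        · exact Or.inl rfl
        · exact (hABne _ hzA _ hbB rfl).elim
        · exact absurd hzA hvA
      · refine ncard_le_two_of_subset_pair (x := b) (y := b) ?_
        rintro z ⟨hz, hzB⟩
        rcases hz with (rfl | rfl) | rfl
        · exact (hABne _ haA _ hzB rfl).elim
        · exact Or.inl rfl
        · exact absurd hzB hvB
  by_cases hγ2 : ∃ b ∈ B, Even (degIn G Set.univ b)
  · -- an even vertex b in B; its A-neighbours are all odd : remove {b}, {a}, {v}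
    obtain ⟨b, hbB, heb⟩ := hγ2
    have hvb : ¬ G.Adj v b := fun h => hβ b (Or.inr hbB) h heb
    obtain ⟨a, haA, hba⟩ := (hBA b hbB).1
    push_neg at hγ1
    have hoa : ¬ Even (degIn G Set.univ a) := hγ1 a haA
    have hva : G.Adj v a := hOdd a (Or.inl haA) hoa
    have hab : a ≠ b := hABne a haA b hbB
    have hvnea : v ≠ a := fun h => hvA (h ▸ haA)
    have hvneb : v ≠ b := fun h => hvB (h ▸ hbB)
    have eda : degIn G (Set.univ \ {b}) a + 1 = degIn G Set.univ a :=
      degIn_diff_adj hba.symm (Set.mem_univ b)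
    have edv : degIn G (Set.univ \ {b}) v = degIn G Set.univ v :=
      degIn_diff_not_adj hvb
    have hW1 : (Set.univ \ {b}) \ {a} = Set.univ \ (({b} : Set V) ∪ {a}) := by
      rw [Set.diff_diff]
    have edva : degIn G ((Set.univ \ {b}) \ {a}) v + 1 = degIn G (Set.univ \ {b}) v :=
      degIn_diff_adj hva ⟨Set.mem_univ a, by simpa using hab⟩
    refine ⟨{b} ∪ {a} ∪ {v}, ?_, admissible_three _ _ _
      (simpleAdmissibleIn_singleton (Set.mem_univ b) heb)
      (simpleAdmissibleIn_singleton ⟨Set.mem_univ a, by simpa using hab⟩ ?_)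
      (by
        rw [← hW1]
        refine simpleAdmissibleIn_singleton ⟨⟨Set.mem_univ v, by simpa using hvneb⟩,
          by simpa using hvnea⟩ ?_
        simp only [Nat.even_iff] at hdv ⊢; omega),
      Or.inr rfl, ?_, ?_⟩
    · rintro z ((rfl | rfl) | rfl)
      · exact Or.inl (Or.inr hbB)
      · exact Or.inl (Or.inl haA)
      · exact Or.inr rfl
    · simp only [Nat.even_iff] at hoa ⊢; omega
    · refine ncard_le_two_of_subset_pair (x := a) (y := a) ?_
      rintro z ⟨hz, hzA⟩
      rcases hz with (rfl | rfl) | rfl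
      · exact (hABne _ hzA _ hbB rfl).elim
      · exact Or.inl rfl
      · exact absurd hzA hvA
    · refine ncard_le_two_of_subset_pair (x := b) (y := b) ?_
      rintro z ⟨hz, hzB⟩
      rcases hz with (rfl | rfl) | rfl
      · exact Or.inl rfl
      · exact (hABne _ haA _ hzB rfl).elim
      · exact absurd hzB hvB
  · -- every vertex of A ∪ B is odd, hence a neighbour of v
    push_neg at hγ1 hγ2
    have hAne : A.Nonempty := Set.nonempty_of_ncard_ne_zero (by omega)
    obtain ⟨a, haA⟩ := hAne
    obtain ⟨b₁, hb₁B, hab₁⟩ := (hAB a haA).1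
    obtain ⟨b', hb'B, hab'⟩ := (hAB a haA).2
    have hb₁b' : b₁ ≠ b' := fun h => hab' (h ▸ hab₁)
    have hoa : ¬ Even (degIn G Set.univ a) := hγ1 a haA
    have hob₁ : ¬ Even (degIn G Set.univ b₁) := hγ2 b₁ hb₁B
    have hob' : ¬ Even (degIn G Set.univ b') := hγ2 b' hb'B
    have hva : G.Adj v a := hOdd a (Or.inl haA) hoa
    have hvb₁ : G.Adj v b₁ := hOdd b₁ (Or.inr hb₁B) hob₁
    have hvb' : G.Adj v b' := hOdd b' (Or.inr hb'B) hob'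
    have hab'ne : a ≠ b' := hABne a haA b' hb'B
    have hab₁ne : a ≠ b₁ := hABne a haA b₁ hb₁B
    have hvnea : v ≠ a := fun h => hvA (h ▸ haA)
    have hvneb₁ : v ≠ b₁ := fun h => hvB (h ▸ hb₁B)
    have hvneb' : v ≠ b' := fun h => hvB (h ▸ hb'B)
    -- remove {a, b'}, then {b₁}, then {v}
    have hW1 : (Set.univ \ {a}) \ {b'} = Set.univ \ ({a, b'} : Set V) := by
      rw [Set.diff_diff, Set.singleton_union]
    have hW2 : ((Set.univ \ {a}) \ {b'}) \ {b₁} = Set.univ \ (({a, b'} : Set V) ∪ {b₁}) := by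
      rw [Set.diff_diff, Set.diff_diff, Set.singleton_union, Set.insert_union]
    have eb₁a : degIn G (Set.univ \ {a}) b₁ + 1 = degIn G Set.univ b₁ :=
      degIn_diff_adj hab₁.symm (Set.mem_univ a)
    have eb₁b' : degIn G ((Set.univ \ {a}) \ {b'}) b₁ = degIn G (Set.univ \ {a}) b₁ :=
      degIn_diff_not_adj (hBind b₁ hb₁B b' hb'B)
    have ev1 : degIn G (Set.univ \ {a}) v + 1 = degIn G Set.univ v :=
      degIn_diff_adj hva (Set.mem_univ a)
    have ev2 : degIn G ((Set.univ \ {a}) \ {b'}) v + 1 = degIn G (Set.univ \ {a}) v :=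
      degIn_diff_adj hvb' ⟨Set.mem_univ b', by simpa using hab'ne.symm⟩
    have ev3 : degIn G (((Set.univ \ {a}) \ {b'}) \ {b₁}) v + 1
        = degIn G ((Set.univ \ {a}) \ {b'}) v :=
      degIn_diff_adj hvb₁ ⟨⟨Set.mem_univ b₁, by simpa using hab₁ne.symm⟩, by simpa using hb₁b'⟩
    refine ⟨{a, b'} ∪ {b₁} ∪ {v}, ?_, admissible_three _ _ _
      (simpleAdmissibleIn_pair (Set.mem_univ a) (Set.mem_univ b') hab'ne hab' ?_)
      (by
        rw [← hW1]
        refine simpleAdmissibleIn_singleton ⟨⟨Set.mem_univ b₁, by simpa using hab₁ne.symm⟩,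
          by simpa using hb₁b'⟩ ?_
        simp only [Nat.even_iff] at hob₁ ⊢; omega)
      (by
        rw [← hW2]
        refine simpleAdmissibleIn_singleton ⟨⟨⟨Set.mem_univ v, by simpa using hvnea⟩,
          by simpa using hvneb'⟩, by simpa using hvneb₁⟩ ?_
        simp only [Nat.even_iff] at hdv ⊢; omega),
      Or.inr rfl, ?_, ?_⟩
    · rintro z (((rfl | rfl) | rfl) | rfl)
      · exact Or.inl (Or.inl haA)
      · exact Or.inl (Or.inr hb'B)
      · exact Or.inl (Or.inr hb₁B)
      · exact Or.inr rfl
    · simp only [Nat.even_iff] at hoa hob' ⊢; omega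
    · refine ncard_le_two_of_subset_pair (x := a) (y := a) ?_
      rintro z ⟨hz, hzA⟩
      rcases hz with ((rfl | rfl) | rfl) | rfl
      · exact Or.inl rfl
      · exact (hABne _ hzA _ hb'B rfl).elim
      · exact (hABne _ hzA _ hb₁B rfl).elim
      · exact absurd hzA hvA
    · refine ncard_le_two_of_subset_pair (x := b') (y := b₁) ?_
      rintro z ⟨hz, hzB⟩
      rcases hz with ((rfl | rfl) | rfl) | rfl
      · exact (hABne _ haA _ hzB rfl).elim
      · exact Or.inl rfl
      · exact Or.inr rfl
      · exact absurd hzB hvB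
end

section
/- Let G be a finite graph, let R ⊆ V(G) be the vertex set of an induced copy of P_3 in G, and let C be a clique of G with at most two vertices, disjoint from R, all of whose vertices have odd degree in G. Assume every vertex of R is adjacent to every vertex of C. Then there is a set Q ⊆ C ∪ R whose removal from G is admissible, such that C ⊆ Q and R \ Q is a clique of the remaining graph with at most two vertices, all of which have odd degree in the remaining graph. -/
set_option linter.unusedSectionVars false


/-- The path `P_3` with three edges (four vertices): `0 - 1 - 2 - 3`. -/
def P3 : SimpleGraph (Fin 4) where
  Adj x y := (x : ℕ) + 1 = y ∨ (y : ℕ) + 1 = x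
  symm := ⟨by intro x y h; tauto⟩
  loopless := ⟨by intro x h; rcases h with h | h <;> omega⟩

namespace DFSAux

def img {V : Type*} {n : ℕ} (f : Fin n → V) (L : List (Fin n)) : Set V := f '' {i | i ∈ L}

def curPar {n : ℕ} (A : Fin n → Fin n → Bool) (p : Fin n → Bool) (T : List (Fin n)) (i : Fin n) :
    Bool :=
  xor (p i) (T.countP (fun j => A i j) % 2 == 1)

def stepOK {n : ℕ} (A : Fin n → Fin n → Bool) (p : Fin n → Bool) (T S : List (Fin n)) : Bool :=
  decide (S.length ≤ 2) && decide S.Nodup && S.all (fun i => decide (i ∉ T)) &&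
    (S.all fun i => S.all fun j => decide (i = j) || !A i j) &&
    (S.countP (curPar A p T) % 2 == 0)

def valid {n : ℕ} (A : Fin n → Fin n → Bool) (p : Fin n → Bool) :
    List (Fin n) → List (List (Fin n)) → Bool
  | _, [] => true
  | T, S :: rest => stepOK A p T S && valid A p (T ++ S) rest

def remList {n : ℕ} (sc : List (List (Fin n))) : List (Fin n) :=
  (List.finRange n).filter (fun i => decide ((i : ℕ) < 4) && decide (i ∉ sc.flatten))

def remCheck {n : ℕ} (A : Fin n → Fin n → Bool) (p : Fin n → Bool)
    (sc : List (List (Fin n))) : Bool :=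
  ((List.finRange n).all fun i => decide ((i : ℕ) < 4) || decide (i ∈ sc.flatten)) &&
    decide ((remList sc).length ≤ 2) &&
    ((remList sc).all fun i => (remList sc).all fun j => decide (i = j) || A i j) &&
    ((remList sc).all (curPar A p sc.flatten))

variable {V : Type*} [Fintype V] {G : SimpleGraph V} {n : ℕ} {f : Fin n → V}
  {A : Fin n → Fin n → Bool} {p : Fin n → Bool}

lemma mem_img {L : List (Fin n)} {x : V} : x ∈ img f L ↔ ∃ i ∈ L, f i = x := by
  simp [img]

lemma img_nil : img f ([] : List (Fin n)) = ∅ := by simp [img]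

lemma img_append (L₁ L₂ : List (Fin n)) : img f (L₁ ++ L₂) = img f L₁ ∪ img f L₂ := by
  have : {i | i ∈ L₁ ++ L₂} = {i | i ∈ L₁} ∪ {i | i ∈ L₂} := by ext i; simp
  rw [img, this, Set.image_union]; rfl

lemma inter_img (hf : Function.Injective f) (hA : ∀ i j, G.Adj (f i) (f j) ↔ A i j = true)
    (i : Fin n) {T : List (Fin n)} (hT : T.Nodup) :
    (G.neighborSet (f i) ∩ img f T).ncard = T.countP (fun j => A i j) := by
  have h1 : G.neighborSet (f i) ∩ img f T = f '' {j | j ∈ T.filter (fun j => A i j)} := by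
    ext x
    simp only [Set.mem_inter_iff, SimpleGraph.mem_neighborSet, mem_img, Set.mem_image,
      Set.mem_setOf_eq, List.mem_filter]
    constructor
    · rintro ⟨hadj, j, hj, rfl⟩
      exact ⟨j, ⟨hj, (hA i j).1 hadj⟩, rfl⟩
    · rintro ⟨j, ⟨hj, hAij⟩, rfl⟩
      exact ⟨(hA i j).2 hAij, j, hj, rfl⟩
  have h2 : {j | j ∈ T.filter (fun j => A i j)} = ↑(T.filter (fun j => A i j)).toFinset := by
    ext j; simp
  rw [h1, Set.ncard_image_of_injective _ hf, h2, Set.ncard_coe_finset,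
    List.toFinset_card_of_nodup (hT.filter _), List.countP_eq_length_filter]

lemma degIn_univ_eq (v : V) : degIn G Set.univ v = (G.neighborSet v).ncard := by
  simp [degIn]

lemma degIn_diff (T : Set V) (v : V) :
    degIn G (Set.univ \ T) v = degIn G Set.univ v - (G.neighborSet v ∩ T).ncard := by
  have h1 : G.neighborSet v ∩ (Set.univ \ T) =
      (G.neighborSet v ∩ Set.univ) \ (G.neighborSet v ∩ T) := by
    ext x
    simp only [Set.mem_inter_iff, Set.mem_diff, Set.mem_univ, true_and, and_true]
    tauto
  have h2 : G.neighborSet v ∩ T ⊆ G.neighborSet v ∩ Set.univ := by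
    intro x hx; exact ⟨hx.1, trivial⟩
  rw [degIn, degIn, h1, Set.ncard_diff h2 (Set.toFinite _)]

lemma inter_le (v : V) (s : Set V) :
    (G.neighborSet v ∩ s).ncard ≤ degIn G Set.univ v := by
  rw [degIn_univ_eq]
  exact Set.ncard_le_ncard Set.inter_subset_left (Set.toFinite _)

lemma odd_degIn (hf : Function.Injective f) (hA : ∀ i j, G.Adj (f i) (f j) ↔ A i j = true)
    (hp : ∀ i, p i = true ↔ Odd (degIn G Set.univ (f i)))
    {T : List (Fin n)} (hT : T.Nodup) (i : Fin n) :
    Odd (degIn G (Set.univ \ img f T) (f i)) ↔ curPar A p T i = true := by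
  rw [degIn_diff, inter_img hf hA i hT]
  have hle : T.countP (fun j => A i j) ≤ degIn G Set.univ (f i) := by
    rw [← inter_img hf hA i hT]; exact inter_le _ _
  have hd := hp i
  rw [Nat.odd_iff] at hd ⊢
  unfold curPar
  rcases hpi : p i <;> rcases hcp : (T.countP (fun j => A i j) % 2 == 1) <;>
    [(have hcp' : ¬ (T.countP (fun j => A i j) % 2 = 1) := by simpa using hcp);
     (have hcp' : T.countP (fun j => A i j) % 2 = 1 := by simpa using hcp);
     (have hcp' : ¬ (T.countP (fun j => A i j) % 2 = 1) := by simpa using hcp);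
     (have hcp' : T.countP (fun j => A i j) % 2 = 1 := by simpa using hcp)] <;>
    simp [hpi] at hd ⊢ <;> omega

lemma prodmk_inj (x : V) : Function.Injective (fun y : V => (x, y)) := by
  intro a b h
  simpa using congrArg Prod.snd h

lemma step_admissible (hf : Function.Injective f)
    (hA : ∀ i j, G.Adj (f i) (f j) ↔ A i j = true)
    (hp : ∀ i, p i = true ↔ Odd (degIn G Set.univ (f i)))
    {T S : List (Fin n)} (hT : T.Nodup) (hS : stepOK A p T S = true) :
    SimpleAdmissibleIn G (Set.univ \ img f T) (img f S) := by
  simp only [stepOK, Bool.and_eq_true, decide_eq_true_eq, List.all_eq_true, beq_iff_eq] at hS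
  obtain ⟨⟨⟨⟨hlen, hnd⟩, hdisj'⟩, hind⟩, hpar⟩ := hS
  simp only [Bool.or_eq_true, decide_eq_true_eq, Bool.not_eq_true'] at hind
  have hsub : img f S ⊆ Set.univ \ img f T := by
    rintro x ⟨i, hi, rfl⟩
    refine ⟨trivial, ?_⟩
    rintro ⟨j, hj, hfj⟩
    exact hdisj' i hi (hf hfj ▸ hj)
  have hindep : ∀ u ∈ img f S, ∀ v ∈ img f S, ¬ G.Adj u v := by
    rintro u ⟨i, hi, rfl⟩ v ⟨j, hj, rfl⟩ hadj
    rcases hind i hi j hj with h | h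
    · subst h; exact G.irrefl hadj
    · rw [hA] at hadj; simp [hadj] at h
  refine ⟨hsub, hindep, ?_⟩
  match S, hlen, hnd, hdisj', hind, hpar with
  | [], _, _, _, _, _ =>
    have : {q : V × V | G.Adj q.1 q.2 ∧ q.1 ∈ img f [] ∧ q.2 ∈ (Set.univ \ img f T) \ img f []}
        = ∅ := by
      ext q; simp [img_nil]
    rw [this]; simp
  | [i], _, _, hdisj', _, hpar =>
    have hB : {q : V × V | G.Adj q.1 q.2 ∧ q.1 ∈ img f [i] ∧
        q.2 ∈ (Set.univ \ img f T) \ img f [i]}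
        = (fun y : V => (f i, y)) '' (G.neighborSet (f i) ∩ (Set.univ \ img f T)) := by
      ext ⟨x, y⟩
      simp only [Set.mem_setOf_eq, mem_img, List.mem_singleton, Set.mem_image,
        Set.mem_inter_iff, SimpleGraph.mem_neighborSet, Set.mem_diff]
      constructor
      · rintro ⟨hadj, ⟨i', hi', rfl⟩, hy, hy2⟩
        subst hi'
        exact ⟨y, ⟨hadj, hy⟩, rfl⟩
      · rintro ⟨y', ⟨hadj, hy⟩, heq⟩
        obtain ⟨h1, h2⟩ := Prod.mk.injEq .. ▸ heq
        subst h1; subst h2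
        refine ⟨hadj, ⟨i, rfl, rfl⟩, hy, ?_⟩
        rintro ⟨i', hi', hfi⟩
        subst hi'
        exact G.irrefl (hfi ▸ hadj)
    rw [hB, Set.ncard_image_of_injective _ (prodmk_inj _)]
    have hcp : curPar A p T i = false := by
      simp only [List.countP_cons, List.countP_nil] at hpar
      rcases h : curPar A p T i
      · rfl
      · simp [h] at hpar
    have hodd := odd_degIn hf hA hp hT i
    rw [Nat.odd_iff] at hodd
    simp only [hcp] at hodd
    have heq : (G.neighborSet (f i) ∩ (Set.univ \ img f T)).ncard
        = degIn G (Set.univ \ img f T) (f i) := rfl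
    rw [heq, Nat.even_iff]
    simp at hodd
    omega
  | [i, j], _, hnd, hdisj', hind, hpar =>
    have hij : i ≠ j := by simp [List.nodup_cons] at hnd; tauto
    have hAij : A i j = false := by
      rcases hind i (by simp) j (by simp) with h | h
      · exact absurd h hij
      · exact h
    have hAji : A j i = false := by
      rcases hind j (by simp) i (by simp) with h | h
      · exact absurd h.symm hij
      · exact h
    have hnadj : ¬ G.Adj (f i) (f j) := by rw [hA, hAij]; simp
    have hnadj' : ¬ G.Adj (f j) (f i) := by rw [hA, hAji]; simp
    have hfij : f i ≠ f j := fun h => hij (hf h)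
    have hB : {q : V × V | G.Adj q.1 q.2 ∧ q.1 ∈ img f [i, j] ∧
        q.2 ∈ (Set.univ \ img f T) \ img f [i, j]}
        = ((fun y : V => (f i, y)) '' (G.neighborSet (f i) ∩ (Set.univ \ img f T))) ∪
          ((fun y : V => (f j, y)) '' (G.neighborSet (f j) ∩ (Set.univ \ img f T))) := by
      ext ⟨x, y⟩
      simp only [Set.mem_setOf_eq, mem_img, List.mem_cons, List.mem_singleton,
        List.not_mem_nil, or_false, Set.mem_image, Set.mem_inter_iff,
        SimpleGraph.mem_neighborSet, Set.mem_diff, Set.mem_union]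
      constructor
      · rintro ⟨hadj, ⟨i', hi' | hi', rfl⟩, hy, hy2⟩
        · subst hi'; exact Or.inl ⟨y, ⟨hadj, hy⟩, rfl⟩
        · subst hi'; exact Or.inr ⟨y, ⟨hadj, hy⟩, rfl⟩
      · rintro (⟨y', ⟨hadj, hy⟩, heq⟩ | ⟨y', ⟨hadj, hy⟩, heq⟩) <;>
          obtain ⟨h1, h2⟩ := Prod.mk.injEq .. ▸ heq <;> subst h1 <;> subst h2
        · refine ⟨hadj, ⟨i, Or.inl rfl, rfl⟩, hy, ?_⟩
          rintro ⟨i', hi' | hi', hfi⟩ <;> subst hi'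
          · exact G.irrefl (hfi ▸ hadj)
          · exact hnadj (hfi ▸ hadj)
        · refine ⟨hadj, ⟨j, Or.inr rfl, rfl⟩, hy, ?_⟩
          rintro ⟨i', hi' | hi', hfi⟩ <;> subst hi'
          · exact hnadj' (hfi ▸ hadj)
          · exact G.irrefl (hfi ▸ hadj)
    rw [hB, Set.ncard_union_eq ?disj (Set.toFinite _) (Set.toFinite _),
      Set.ncard_image_of_injective _ (prodmk_inj _), Set.ncard_image_of_injective _ (prodmk_inj _)]
    case disj =>
      rw [Set.disjoint_left]
      rintro ⟨x, y⟩ ⟨y1, _, heq1⟩ ⟨y2, _, heq2⟩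
      obtain ⟨e1, _⟩ := Prod.mk.injEq .. ▸ heq1
      obtain ⟨e2, _⟩ := Prod.mk.injEq .. ▸ heq2
      exact hfij (e1.trans e2.symm)
    have hoddi := odd_degIn hf hA hp hT i
    have hoddj := odd_degIn hf hA hp hT j
    have heqi : (G.neighborSet (f i) ∩ (Set.univ \ img f T)).ncard
        = degIn G (Set.univ \ img f T) (f i) := rfl
    have heqj : (G.neighborSet (f j) ∩ (Set.univ \ img f T)).ncard
        = degIn G (Set.univ \ img f T) (f j) := rfl
    rw [heqi, heqj, Nat.even_iff]
    simp only [List.countP_cons, List.countP_nil] at hpar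
    rw [Nat.odd_iff] at hoddi hoddj
    rcases hci : curPar A p T i <;> rcases hcj : curPar A p T j <;>
      simp only [hci, hcj] at hoddi hoddj hpar <;> simp at hoddi hoddj hpar <;> omega
  | _ :: _ :: _ :: _, h, _, _, _, _ => simp at h

lemma admissible_nil (W : Set V) : AdmissibleIn G W ∅ :=
  ⟨0, fun _ => ∅, by simp, by simp⟩

lemma admissible_cons {W S T' : Set V} (h1 : SimpleAdmissibleIn G W S)
    (h2 : AdmissibleIn G (W \ S) T') : AdmissibleIn G W (S ∪ T') := by
  obtain ⟨k, Ss, hstep, hun⟩ := h2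
  set Ss' : ℕ → Set V := fun i => if i = 0 then S else Ss (i - 1) with hSs'
  have hkey : ∀ m, (⋃ j ∈ Finset.range (m + 1), Ss' j) = S ∪ ⋃ j ∈ Finset.range m, Ss j := by
    intro m
    ext x
    simp only [Set.mem_iUnion, Set.mem_union, Finset.mem_range]
    constructor
    · rintro ⟨j, hj, hx⟩
      rcases j with _ | j
      · left; simpa [hSs'] using hx
      · right; exact ⟨j, by omega, by simpa [hSs'] using hx⟩
    · rintro (hx | ⟨j, hj, hx⟩)
      · exact ⟨0, by omega, by simpa [hSs']⟩
      · exact ⟨j + 1, by omega, by simpa [hSs']⟩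
  refine ⟨k + 1, Ss', ?_, ?_⟩
  · intro i hi
    rcases i with _ | i
    · simpa [hSs'] using h1
    · have h := hstep i (by omega)
      have : W \ ⋃ j ∈ Finset.range (i + 1), Ss' j = (W \ S) \ ⋃ j ∈ Finset.range i, Ss j := by
        rw [hkey, Set.diff_diff]
      rw [this]
      simpa [hSs'] using h
  · rw [hkey, hun]

lemma valid_nodup : ∀ (sc : List (List (Fin n))) (T : List (Fin n)), T.Nodup →
    valid A p T sc = true → (T ++ sc.flatten).Nodup := by
  intro sc
  induction sc with
  | nil => intro T hT _; simpa using hT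
  | cons S rest ih =>
    intro T hT hv
    simp only [valid, Bool.and_eq_true] at hv
    obtain ⟨hstep, hv⟩ := hv
    simp only [stepOK, Bool.and_eq_true, decide_eq_true_eq, List.all_eq_true] at hstep
    obtain ⟨⟨⟨⟨_, hnd⟩, hdisj'⟩, _⟩, _⟩ := hstep
    have hTS : (T ++ S).Nodup := by
      rw [List.nodup_append]
      exact ⟨hT, hnd, fun a ha b hb hab => by subst hab; simpa using hdisj' a hb ha⟩
    have := ih (T ++ S) hTS hv
    simpa [List.append_assoc] using this

lemma admissible_script (hf : Function.Injective f)
    (hA : ∀ i j, G.Adj (f i) (f j) ↔ A i j = true)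
    (hp : ∀ i, p i = true ↔ Odd (degIn G Set.univ (f i))) :
    ∀ (sc : List (List (Fin n))) (T : List (Fin n)), T.Nodup →
    valid A p T sc = true → AdmissibleIn G (Set.univ \ img f T) (img f sc.flatten) := by
  intro sc
  induction sc with
  | nil =>
    intro T _ _
    simpa [img_nil] using admissible_nil (G := G) (Set.univ \ img f T)
  | cons S rest ih =>
    intro T hT hv
    simp only [valid, Bool.and_eq_true] at hv
    obtain ⟨hstep, hv⟩ := hv
    have h1 := step_admissible hf hA hp hT hstep
    have hTS : (T ++ S).Nodup := by
      simp only [stepOK, Bool.and_eq_true, decide_eq_true_eq, List.all_eq_true] at hstep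
      obtain ⟨⟨⟨⟨_, hnd⟩, hdisj'⟩, _⟩, _⟩ := hstep
      rw [List.nodup_append]
      exact ⟨hT, hnd, fun a ha b hb hab => by subst hab; simpa using hdisj' a hb ha⟩
    have h2 := ih (T ++ S) hTS hv
    rw [img_append, ← Set.diff_diff] at h2
    have : img f (S :: rest).flatten = img f S ∪ img f rest.flatten := by
      rw [List.flatten_cons, img_append]
    rw [this]
    exact admissible_cons h1 h2

lemma master (G : SimpleGraph V) (R C : Set V) {n : ℕ} (f : Fin n → V)
    (hf : Function.Injective f) (A : Fin n → Fin n → Bool)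
    (hA : ∀ i j, G.Adj (f i) (f j) ↔ A i j = true) (p : Fin n → Bool)
    (hp : ∀ i, p i = true ↔ Odd (degIn G Set.univ (f i)))
    (hR : R = f '' {i | (i : ℕ) < 4}) (hC : C = f '' {i | 4 ≤ (i : ℕ)})
    (sc : List (List (Fin n))) (hv : valid A p [] sc = true)
    (hr : remCheck A p sc = true) :
    ∃ Q ⊆ C ∪ R, Admissible G Q ∧ C ⊆ Q ∧ G.IsClique (R \ Q) ∧
      (R \ Q).ncard ≤ 2 ∧
      ∀ v ∈ R \ Q, Odd (degIn G (Set.univ \ Q) v) := by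
  simp only [remCheck, Bool.and_eq_true, decide_eq_true_eq, List.all_eq_true,
    Bool.or_eq_true] at hr
  obtain ⟨⟨⟨hall, hlen⟩, hclq⟩, hparm⟩ := hr
  subst hR
  subst hC
  set T := sc.flatten with hTdef
  have hTnodup : T.Nodup := by
    have := valid_nodup sc [] (List.nodup_nil) hv
    simpa using this
  have hmemrem : ∀ i : Fin n, i ∈ remList sc ↔ ((i : ℕ) < 4 ∧ i ∉ T) := by
    intro i
    simp only [remList, List.mem_filter, List.mem_finRange, true_and, Bool.and_eq_true,
      decide_eq_true_eq]
    exact Iff.rfl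
  set Q := img f T with hQdef
  have hQsub : Q ⊆ (f '' {i | 4 ≤ (i : ℕ)}) ∪ (f '' {i | (i : ℕ) < 4}) := by
    rintro x ⟨i, hi, rfl⟩
    by_cases h : (i : ℕ) < 4
    · exact Or.inr ⟨i, h, rfl⟩
    · exact Or.inl ⟨i, show 4 ≤ (i : ℕ) by omega, rfl⟩
  have hadm : Admissible G Q := by
    have := admissible_script hf hA hp sc [] (List.nodup_nil) hv
    unfold Admissible
    simpa [img_nil] using this
  have hCQ : (f '' {i | 4 ≤ (i : ℕ)}) ⊆ Q := by
    rintro x ⟨i, hi, rfl⟩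
    simp only [Set.mem_setOf_eq] at hi
    rcases hall i (List.mem_finRange i) with h | h
    · omega
    · exact ⟨i, h, rfl⟩
  have hRQ : (f '' {i | (i : ℕ) < 4}) \ Q = f '' {i | i ∈ remList sc} := by
    ext x
    constructor
    · rintro ⟨hxR, hxQ⟩
      obtain ⟨i, hi4, rfl⟩ := hxR
      refine ⟨i, (hmemrem i).2 ⟨hi4, ?_⟩, rfl⟩
      intro hiT
      exact hxQ ⟨i, hiT, rfl⟩
    · rintro ⟨i, hi, rfl⟩
      obtain ⟨hi4, hiT⟩ := (hmemrem i).1 hi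
      refine ⟨⟨i, hi4, rfl⟩, ?_⟩
      rintro ⟨j, hjT, hfj⟩
      exact hiT (hf hfj ▸ hjT)
  refine ⟨Q, hQsub, hadm, hCQ, ?_, ?_, ?_⟩
  · rw [hRQ]
    rintro u ⟨i, hi, rfl⟩ v ⟨j, hj, rfl⟩ huv
    have hij : i ≠ j := fun h => huv (h ▸ rfl)
    rcases hclq i hi j hj with h | h
    · exact absurd h hij
    · exact (hA i j).2 h
  · rw [hRQ, Set.ncard_image_of_injective _ hf]
    have : {i | i ∈ remList sc} = ↑(remList sc).toFinset := by ext i; simp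
    rw [this, Set.ncard_coe_finset]
    exact le_trans (List.toFinset_card_le _) hlen
  · rintro v hv'
    rw [hRQ] at hv'
    obtain ⟨i, hi, rfl⟩ := hv'
    exact (odd_degIn hf hA hp hTnodup i).2 (hparm i hi)

def Amat (n : ℕ) : Fin n → Fin n → Bool := fun i j =>
  decide (i ≠ j) &&
    (decide (4 ≤ (i : ℕ)) || decide (4 ≤ (j : ℕ)) ||
      decide ((i : ℕ) + 1 = (j : ℕ) ∨ (j : ℕ) + 1 = (i : ℕ)))

def pext (n : ℕ) (q : Fin 4 → Bool) : Fin n → Bool := fun i =>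
  if h : (i : ℕ) < 4 then q ⟨(i : ℕ), h⟩ else true

def script4 (q : Fin 4 → Bool) : List (List (Fin 4)) :=
  match q 0, q 1, q 2, q 3 with
  | false, false, false, false => [[1],[0,2]]
  | false, false, false, true => [[0,2],[1,3]]
  | false, false, true, false => [[1,3],[0,2]]
  | false, false, true, true => [[0],[1,3]]
  | false, true, false, false => [[0,2],[1,3]]
  | false, true, false, true => [[2],[0,3]]
  | false, true, true, false => [[0],[1,3]]
  | false, true, true, true => [[1,3],[0,2]]
  | true, false, false, false => [[1,3],[0,2]]
  | true, false, false, true => [[0,3]]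
  | true, false, true, false => [[1],[0,2]]
  | true, false, true, true => [[0,2],[1,3]]
  | true, true, false, false => [[2],[0,3]]
  | true, true, false, true => [[1,3],[0,2]]
  | true, true, true, false => [[0,2],[1,3]]
  | true, true, true, true => [[0,2],[3]]

theorem abs4 : ∀ q : Fin 4 → Bool,
    (valid (Amat 4) (pext 4 q) [] (script4 q) &&
      remCheck (Amat 4) (pext 4 q) (script4 q)) = true := by decide

def script5 (q : Fin 4 → Bool) : List (List (Fin 5)) :=
  match q 0, q 1, q 2, q 3 with
  | false, false, false, false => [[1],[4],[2],[0,3]]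
  | false, false, false, true => [[0],[4],[1,3]]
  | false, false, true, false => [[3],[4],[0,2]]
  | false, false, true, true => [[0],[4],[2],[1,3]]
  | false, true, false, false => [[0],[4],[1,3]]
  | false, true, false, true => [[2],[4],[0,3],[1]]
  | false, true, true, false => [[0],[4],[2],[1,3]]
  | false, true, true, true => [[0],[1],[2],[4]]
  | true, false, false, false => [[1],[4],[0,3]]
  | true, false, false, true => [[1],[4],[2],[0,3]]
  | true, false, true, false => [[1],[4],[0,2],[3]]
  | true, false, true, true => [[1],[4],[0,2]]
  | true, true, false, false => [[2],[4],[0],[1,3]]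
  | true, true, false, true => [[2],[4],[1,3]]
  | true, true, true, false => [[3],[2],[1],[4]]
  | true, true, true, true => [[0,2],[3],[4],[1]]

theorem abs5 : ∀ q : Fin 4 → Bool,
    (valid (Amat 5) (pext 5 q) [] (script5 q) &&
      remCheck (Amat 5) (pext 5 q) (script5 q)) = true := by decide

def script6 (q : Fin 4 → Bool) : List (List (Fin 6)) :=
  match q 0, q 1, q 2, q 3 with
  | false, false, false, false => [[1],[4],[2],[5],[0,3]]
  | false, false, false, true => [[1],[4],[2],[5],[3]]
  | false, false, true, false => [[0],[4],[1],[5],[2]]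
  | false, false, true, true => [[0],[4],[2],[5],[1,3]]
  | false, true, false, false => [[2],[4],[3],[5],[0]]
  | false, true, false, true => [[2],[4],[0,3],[1],[5]]
  | false, true, true, false => [[0],[4],[2],[5],[1,3]]
  | false, true, true, true => [[0],[4],[2],[5],[3]]
  | true, false, false, false => [[1],[4],[2],[5],[0]]
  | true, false, false, true => [[1],[4],[2],[5],[0,3]]
  | true, false, true, false => [[1],[4],[0,2],[3],[5]]
  | true, false, true, true => [[1],[4],[3],[5],[0]]
  | true, true, false, false => [[2],[4],[0],[5],[1,3]]
  | true, true, false, true => [[2],[4],[0],[5],[3]]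
  | true, true, true, false => [[3],[4],[0],[5],[1]]
  | true, true, true, true => [[0,2],[3],[4],[1],[5]]

theorem abs6 : ∀ q : Fin 4 → Bool,
    (valid (Amat 6) (pext 6 q) [] (script6 q) &&
      remCheck (Amat 6) (pext 6 q) (script6 q)) = true := by decide

end DFSAux

instance : DecidableRel P3.Adj := fun x y =>
  decidable_of_iff ((x : ℕ) + 1 = y ∨ (y : ℕ) + 1 = x) Iff.rfl

open DFSAux in
/-- Dense final step: `G[R]` induced copy of `P₃`, `C` a clique of at most two odd-degree
vertices disjoint from `R`, with `R` complete to `C`. Then there is an admissible removal from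
`C ∪ R` removing all of `C` and leaving from `R` a clique of at most two vertices, all of odd
degree in the remaining graph. -/
theorem dense_final_step {V : Type*} [Fintype V] (G : SimpleGraph V) (R C : Set V)
    (hiso : Nonempty (G.induce R ≃g P3))
    (hC : G.IsClique C) (hCm : C.ncard ≤ 2)
    (hdisj : Disjoint R C)
    (hodd : ∀ v ∈ C, Odd ((G.neighborSet v).ncard))
    (hcomp : ∀ u ∈ R, ∀ v ∈ C, G.Adj u v) :
    ∃ Q ⊆ C ∪ R, Admissible G Q ∧ C ⊆ Q ∧ G.IsClique (R \ Q) ∧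
      (R \ Q).ncard ≤ 2 ∧
      ∀ v ∈ R \ Q, Odd (degIn G (Set.univ \ Q) v) := by
  classical
  obtain ⟨e⟩ := hiso
  set a : Fin 4 → V := fun i => ((e.symm i : {x // x ∈ R}) : V) with ha
  have haMem : ∀ i, a i ∈ R := fun i => (e.symm i).2
  have haInj : Function.Injective a := by
    intro i j hij
    exact e.symm.toEquiv.injective (Subtype.ext hij)
  have hadj : ∀ i j, G.Adj (a i) (a j) ↔ P3.Adj i j := by
    intro i j
    exact e.symm.map_rel_iff
  have hch : ∀ i : Fin 4, ∃ b : Bool, b = true ↔ Odd (degIn G Set.univ (a i)) := by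
    intro i
    by_cases h : Odd (degIn G Set.univ (a i))
    · exact ⟨true, by simp [h]⟩
    · exact ⟨false, by simp [h]⟩
  choose p0 hp0 using hch
  have hRrange : R = Set.range a := by
    ext x
    constructor
    · intro hx
      refine ⟨e ⟨x, hx⟩, ?_⟩
      simp [ha]
    · rintro ⟨i, rfl⟩
      exact haMem i
  have hCfin : C.Finite := Set.toFinite C
  rcases hn : C.ncard with _ | _ | k
  · -- C = ∅, n = 4
    have hCe : C = ∅ := (Set.ncard_eq_zero hCfin).mp hn
    have hA4 : ∀ i j, G.Adj (a i) (a j) ↔ Amat 4 i j = true := by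
      intro i j
      rw [hadj]
      revert i j
      decide
    have hp4 : ∀ i, pext 4 p0 i = true ↔ Odd (degIn G Set.univ (a i)) := by
      intro i
      have : pext 4 p0 i = p0 i := by simp [pext]
      rw [this]
      exact hp0 i
    have hR4 : R = a '' {i | (i : ℕ) < 4} := by
      have h1 : {i : Fin 4 | (i : ℕ) < 4} = Set.univ := by
        ext i; simpa using i.isLt
      rw [h1, Set.image_univ, hRrange]
    have hC4 : C = a '' {i : Fin 4 | 4 ≤ (i : ℕ)} := by
      have h1 : {i : Fin 4 | 4 ≤ (i : ℕ)} = ∅ := by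
        ext i; simpa using i.isLt
      rw [h1, hCe, Set.image_empty]
    have habs := abs4 p0
    rw [Bool.and_eq_true] at habs
    exact master G R C a haInj (Amat 4) hA4 (pext 4 p0) hp4 hR4 hC4 (script4 p0) habs.1 habs.2
  · -- C = {c}, n = 5
    obtain ⟨c, rfl⟩ := Set.ncard_eq_one.mp hn
    have hcR : c ∉ R := fun h => (Set.disjoint_left.mp hdisj h) rfl
    have hac : ∀ i, G.Adj (a i) c := fun i => hcomp (a i) (haMem i) c rfl
    have hoddc : Odd (degIn G Set.univ c) := by
      rw [degIn_univ_eq]; exact hodd c rfl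
    set f : Fin 5 → V := fun i => if h : (i : ℕ) < 4 then a ⟨(i : ℕ), h⟩ else c with hfdef
    have hfa : ∀ (i : Fin 5) (h : (i : ℕ) < 4), f i = a ⟨(i : ℕ), h⟩ := by
      intro i h; simp [hfdef, h]
    have hfc : ∀ (i : Fin 5), ¬ (i : ℕ) < 4 → f i = c := by
      intro i h; simp [hfdef, h]
    have hf : Function.Injective f := by
      intro i j hij
      by_cases hi : (i : ℕ) < 4 <;> by_cases hj : (j : ℕ) < 4
      · rw [hfa i hi, hfa j hj] at hij
        have := haInj hij
        exact Fin.ext (by simpa using congrArg Fin.val this)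
      · rw [hfa i hi, hfc j hj] at hij
        exact absurd (hij ▸ haMem _) hcR
      · rw [hfc i hi, hfa j hj] at hij
        exact absurd (hij.symm ▸ haMem _) hcR
      · exact Fin.ext (by omega)
    have hA5 : ∀ i j, G.Adj (f i) (f j) ↔ Amat 5 i j = true := by
      intro i j
      by_cases hi : (i : ℕ) < 4 <;> by_cases hj : (j : ℕ) < 4
      · rw [hfa i hi, hfa j hj, hadj]
        show _ ↔ (decide (i ≠ j) && _) = true
        simp only [Bool.and_eq_true, Bool.or_eq_true, decide_eq_true_eq]
        show ((i : ℕ) + 1 = (j : ℕ) ∨ (j : ℕ) + 1 = (i : ℕ)) ↔ _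
        constructor
        · intro h
          exact ⟨fun hh => by subst hh; omega, Or.inr (by omega)⟩
        · rintro ⟨hne, h | h⟩
          · omega
          · exact h
      · rw [hfa i hi, hfc j hj]
        refine iff_of_true (hac _) ?_
        simp only [Amat, Bool.and_eq_true, Bool.or_eq_true, decide_eq_true_eq]
        exact ⟨fun hh => by subst hh; omega, Or.inl (Or.inr (by omega))⟩
      · rw [hfc i hi, hfa j hj]
        refine iff_of_true (hac _).symm ?_
        simp only [Amat, Bool.and_eq_true, Bool.or_eq_true, decide_eq_true_eq]
        exact ⟨fun hh => by subst hh; omega, Or.inl (Or.inl (by omega))⟩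
      · have : i = j := Fin.ext (by omega)
        subst this
        rw [hfc i hi]
        exact iff_of_false (G.loopless.irrefl c) (by simp [Amat])
    have hp5 : ∀ i, pext 5 p0 i = true ↔ Odd (degIn G Set.univ (f i)) := by
      intro i
      by_cases hi : (i : ℕ) < 4
      · rw [hfa i hi]
        have : pext 5 p0 i = p0 ⟨(i : ℕ), hi⟩ := by simp [pext, hi]
        rw [this]
        exact hp0 _
      · rw [hfc i hi]
        have : pext 5 p0 i = true := by simp [pext, hi]
        rw [this]
        simp [hoddc]
    have hR5 : R = f '' {i : Fin 5 | (i : ℕ) < 4} := by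
      rw [hRrange]
      ext x
      constructor
      · rintro ⟨i, rfl⟩
        exact ⟨⟨(i : ℕ), by omega⟩, i.isLt, by rw [hfa _ i.isLt]⟩
      · rintro ⟨i, hi, rfl⟩
        exact ⟨⟨(i : ℕ), hi⟩, (hfa i hi).symm⟩
    have hC5 : {c} = f '' {i : Fin 5 | 4 ≤ (i : ℕ)} := by
      ext x
      constructor
      · rintro rfl
        refine ⟨4, ?_, ?_⟩
        · show 4 ≤ ((4 : Fin 5) : ℕ)
          decide
        · exact hfc _ (by decide)
      · rintro ⟨i, hi, rfl⟩
        simp only [Set.mem_setOf_eq] at hi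
        rw [hfc i (by omega)]
        rfl
    have habs := abs5 p0
    rw [Bool.and_eq_true] at habs
    exact master G R {c} f hf (Amat 5) hA5 (pext 5 p0) hp5 hR5 hC5 (script5 p0) habs.1 habs.2
  · -- C = {c, d}, n = 6
    rw [hn] at hCm
    have hk : k = 0 := by omega
    subst hk
    obtain ⟨c, d, hcd, rfl⟩ := Set.ncard_eq_two.mp hn
    have hcR : c ∉ R := fun h => (Set.disjoint_left.mp hdisj h) (Or.inl rfl)
    have hdR : d ∉ R := fun h => (Set.disjoint_left.mp hdisj h) (Or.inr rfl)
    have hac : ∀ i, G.Adj (a i) c := fun i => hcomp (a i) (haMem i) c (Or.inl rfl)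
    have had : ∀ i, G.Adj (a i) d := fun i => hcomp (a i) (haMem i) d (Or.inr rfl)
    have hadjcd : G.Adj c d := hC (Or.inl rfl) (Or.inr rfl) hcd
    have hoddc : Odd (degIn G Set.univ c) := by
      rw [degIn_univ_eq]; exact hodd c (Or.inl rfl)
    have hoddd : Odd (degIn G Set.univ d) := by
      rw [degIn_univ_eq]; exact hodd d (Or.inr rfl)
    set f : Fin 6 → V := fun i =>
      if h : (i : ℕ) < 4 then a ⟨(i : ℕ), h⟩ else if (i : ℕ) = 4 then c else d with hfdef
    have hfa : ∀ (i : Fin 6) (h : (i : ℕ) < 4), f i = a ⟨(i : ℕ), h⟩ := by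
      intro i h; simp [hfdef, h]
    have hfc : ∀ (i : Fin 6), (i : ℕ) = 4 → f i = c := by
      intro i h; simp [hfdef, h]
    have hfd : ∀ (i : Fin 6), (i : ℕ) = 5 → f i = d := by
      intro i h; simp [hfdef, h]
    have hcases : ∀ i : Fin 6, (i : ℕ) < 4 ∨ (i : ℕ) = 4 ∨ (i : ℕ) = 5 := by
      intro i; omega
    have hfRmem : ∀ (i : Fin 6), (i : ℕ) < 4 → f i ∈ R := by
      intro i h; rw [hfa i h]; exact haMem _
    have hf : Function.Injective f := by
      intro i j hij
      rcases hcases i with hi | hi | hi <;> rcases hcases j with hj | hj | hj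
      · rw [hfa i hi, hfa j hj] at hij
        exact Fin.ext (by simpa using congrArg Fin.val (haInj hij))
      · rw [hfa i hi, hfc j hj] at hij
        exact absurd (hij ▸ haMem _) hcR
      · rw [hfa i hi, hfd j hj] at hij
        exact absurd (hij ▸ haMem _) hdR
      · rw [hfc i hi, hfa j hj] at hij
        exact absurd (hij.symm ▸ haMem _) hcR
      · exact Fin.ext (by omega)
      · rw [hfc i hi, hfd j hj] at hij
        exact absurd hij hcd
      · rw [hfd i hi, hfa j hj] at hij
        exact absurd (hij.symm ▸ haMem _) hdR
      · rw [hfd i hi, hfc j hj] at hij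
        exact absurd hij.symm hcd
      · exact Fin.ext (by omega)
    have hA6 : ∀ i j, G.Adj (f i) (f j) ↔ Amat 6 i j = true := by
      intro i j
      have hAmat : Amat 6 i j = true ↔
          (i ≠ j ∧ (4 ≤ (i : ℕ) ∨ 4 ≤ (j : ℕ) ∨ ((i : ℕ) + 1 = (j : ℕ) ∨ (j : ℕ) + 1 = (i : ℕ)))) := by
        simp only [Amat, Bool.and_eq_true, Bool.or_eq_true, decide_eq_true_eq, or_assoc]
      rw [hAmat]
      rcases hcases i with hi | hi | hi <;> rcases hcases j with hj | hj | hj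
      · rw [hfa i hi, hfa j hj, hadj]
        show ((i : ℕ) + 1 = (j : ℕ) ∨ (j : ℕ) + 1 = (i : ℕ)) ↔ _
        constructor
        · intro h
          exact ⟨fun hh => by subst hh; omega, Or.inr (Or.inr h)⟩
        · rintro ⟨hne, h | h | h⟩
          · omega
          · omega
          · exact h
      · rw [hfa i hi, hfc j hj]
        exact iff_of_true (hac _) ⟨fun hh => by subst hh; omega, Or.inr (Or.inl (by omega))⟩
      · rw [hfa i hi, hfd j hj]
        exact iff_of_true (had _) ⟨fun hh => by subst hh; omega, Or.inr (Or.inl (by omega))⟩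
      · rw [hfc i hi, hfa j hj]
        exact iff_of_true (hac _).symm ⟨fun hh => by subst hh; omega, Or.inl (by omega)⟩
      · have : i = j := Fin.ext (by omega)
        subst this
        rw [hfc i hi]
        exact iff_of_false (G.loopless.irrefl c) (by simp)
      · rw [hfc i hi, hfd j hj]
        exact iff_of_true hadjcd ⟨fun hh => by subst hh; omega, Or.inl (by omega)⟩
      · rw [hfd i hi, hfa j hj]
        exact iff_of_true (had _).symm ⟨fun hh => by subst hh; omega, Or.inl (by omega)⟩
      · rw [hfd i hi, hfc j hj]
        exact iff_of_true hadjcd.symm ⟨fun hh => by subst hh; omega, Or.inl (by omega)⟩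
      · have : i = j := Fin.ext (by omega)
        subst this
        rw [hfd i hi]
        exact iff_of_false (G.loopless.irrefl d) (by simp)
    have hp6 : ∀ i, pext 6 p0 i = true ↔ Odd (degIn G Set.univ (f i)) := by
      intro i
      rcases hcases i with hi | hi | hi
      · rw [hfa i hi]
        have : pext 6 p0 i = p0 ⟨(i : ℕ), hi⟩ := by simp [pext, hi]
        rw [this]
        exact hp0 _
      · rw [hfc i hi]
        have : pext 6 p0 i = true := by simp [pext, hi]
        rw [this]
        simp [hoddc]
      · rw [hfd i hi]
        have : pext 6 p0 i = true := by simp [pext, hi]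
        rw [this]
        simp [hoddd]
    have hR6 : R = f '' {i : Fin 6 | (i : ℕ) < 4} := by
      rw [hRrange]
      ext x
      constructor
      · rintro ⟨i, rfl⟩
        exact ⟨⟨(i : ℕ), by omega⟩, i.isLt, by rw [hfa _ i.isLt]⟩
      · rintro ⟨i, hi, rfl⟩
        exact ⟨⟨(i : ℕ), hi⟩, (hfa i hi).symm⟩
    have hC6 : {c, d} = f '' {i : Fin 6 | 4 ≤ (i : ℕ)} := by
      ext x
      constructor
      · rintro (rfl | rfl)
        · refine ⟨4, ?_, ?_⟩
          · show 4 ≤ ((4 : Fin 6) : ℕ)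
            decide
          · exact hfc _ (by decide)
        · refine ⟨5, ?_, ?_⟩
          · show 4 ≤ ((5 : Fin 6) : ℕ)
            decide
          · exact hfd _ (by decide)
      · rintro ⟨i, hi, rfl⟩
        simp only [Set.mem_setOf_eq] at hi
        rcases hcases i with h | h | h
        · omega
        · rw [hfc i h]; exact Or.inl rfl
        · rw [hfd i h]; exact Or.inr rfl
    have habs := abs6 p0
    rw [Bool.and_eq_true] at habs
    exact master G R {c, d} f hf (Amat 6) hA6 (pext 6 p0) hp6 hR6 hC6 (script6 p0) habs.1 habs.2
end
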